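/- arXiv:0911.1548 — 3 statements merged into one kernel-verified Lean document; each statement's English description precedes it below -/
import Mathlib

section
/- Let s ∈ [0,T). Assume Hypotheses (H). If u : [s,T]×ℝ^N → ℝ is bounded and continuous on [s,T]×ℝ^N, is continuously differentiable once with respect to t and twice with respect to x on (s,T]×ℝ^N, and satisfies D_t u(t,x) − (𝒜u)(t,x) ≤ 0 for every (t,x) ∈ (s,T]×ℝ^N as well as u(s,x) ≤ 0 for every x ∈ ℝ^N, then u(t,x) ≤ 0 for every (t,x) ∈ [s,T]×ℝ^N. -/
open Set Filter MeasureTheory Metric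
open scoped Topology ENNReal RealInnerProductSpace Classical

noncomputable section

/-- `ℝ^N` with the Euclidean norm. -/
abbrev ES (N : ℕ) := EuclideanSpace ℝ (Fin N)

/-- First-order partial derivative `D_i f` in the `i`-th coordinate direction. -/
def pd1 {N : ℕ} (f : ES N → ℝ) (i : Fin N) : ES N → ℝ :=
  fun x => fderiv ℝ f x (EuclideanSpace.single i 1)

/-- Second-order partial derivative `D_{ij} f`. -/
def pd2 {N : ℕ} (f : ES N → ℝ) (i j : Fin N) : ES N → ℝ := pd1 (pd1 f j) i

/-- Third-order partial derivative `D_{ijk} f`. -/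
def pd3 {N : ℕ} (f : ES N → ℝ) (i j k : Fin N) : ES N → ℝ := pd1 (pd2 f j k) i

/-- The nonautonomous elliptic operator
`(𝒜 φ)(t,x) = ∑ᵢⱼ qᵢⱼ(t,x) Dᵢⱼφ(x) + ∑ⱼ bⱼ(t,x) Dⱼφ(x) + c(t,x) φ(x)`. -/
def Aop {N : ℕ} (q : ℝ → ES N → Fin N → Fin N → ℝ) (b : ℝ → ES N → Fin N → ℝ)
    (c : ℝ → ES N → ℝ) (φ : ES N → ℝ) (t : ℝ) (x : ES N) : ℝ :=
  (∑ i, ∑ j, q t x i j * pd2 φ i j x) + (∑ j, b t x j * pd1 φ j x) + c t x * φ x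

/-- Membership in the parabolic Hölder space `C^{δ/2,δ}([0,T] × B(0,R))`. -/
def ParabolicHolderOn {N : ℕ} (T δ R : ℝ) (h : ℝ → ES N → ℝ) : Prop :=
  ∃ C : ℝ, ∀ t ∈ Icc (0:ℝ) T, ∀ s ∈ Icc (0:ℝ) T,
    ∀ x ∈ closedBall (0 : ES N) R, ∀ y ∈ closedBall (0 : ES N) R,
      |h t x - h s y| ≤ C * (|t - s| + ‖x - y‖ ^ 2) ^ (δ / 2)

/-- Hypotheses (H) of Lorenzi's paper (smooth unbounded coefficients). -/
structure Hyp (N : ℕ) (T : ℝ) (q : ℝ → ES N → Fin N → Fin N → ℝ)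
    (b : ℝ → ES N → Fin N → ℝ) (c : ℝ → ES N → ℝ) where
  T_pos : 0 < T
  N_pos : 1 ≤ N
  /- (i) smoothness in space and parabolic Hölder regularity up to third-order
     spatial derivatives on `[0,T] × B(0,R)` for every `R`. -/
  δ : ℝ
  δ_mem : δ ∈ Ioo (0:ℝ) 1
  smooth_q : ∀ t ∈ Icc (0:ℝ) T, ∀ i j, ContDiff ℝ 3 fun x => q t x i j
  smooth_b : ∀ t ∈ Icc (0:ℝ) T, ∀ j, ContDiff ℝ 3 fun x => b t x j
  smooth_c : ∀ t ∈ Icc (0:ℝ) T, ContDiff ℝ 3 fun x => c t x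
  holder_q : ∀ R > 0, ∀ i j, ParabolicHolderOn T δ R fun t x => q t x i j
  holder_q1 : ∀ R > 0, ∀ i j k, ParabolicHolderOn T δ R fun t x => pd1 (fun y => q t y i j) k x
  holder_q2 : ∀ R > 0, ∀ i j k l, ParabolicHolderOn T δ R fun t x => pd2 (fun y => q t y i j) k l x
  holder_q3 : ∀ R > 0, ∀ i j k l m, ParabolicHolderOn T δ R fun t x => pd3 (fun y => q t y i j) k l m x
  holder_b : ∀ R > 0, ∀ j, ParabolicHolderOn T δ R fun t x => b t x j
  holder_b1 : ∀ R > 0, ∀ j k, ParabolicHolderOn T δ R fun t x => pd1 (fun y => b t y j) k x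
  holder_b2 : ∀ R > 0, ∀ j k l, ParabolicHolderOn T δ R fun t x => pd2 (fun y => b t y j) k l x
  holder_b3 : ∀ R > 0, ∀ j k l m, ParabolicHolderOn T δ R fun t x => pd3 (fun y => b t y j) k l m x
  holder_c : ∀ R > 0, ParabolicHolderOn T δ R c
  holder_c1 : ∀ R > 0, ∀ k, ParabolicHolderOn T δ R fun t x => pd1 (c t) k x
  holder_c2 : ∀ R > 0, ∀ k l, ParabolicHolderOn T δ R fun t x => pd2 (c t) k l x
  holder_c3 : ∀ R > 0, ∀ k l m, ParabolicHolderOn T δ R fun t x => pd3 (c t) k l m x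
  /- (ii) symmetry and (uniform) ellipticity. -/
  q_symm : ∀ t ∈ Icc (0:ℝ) T, ∀ x i j, q t x i j = q t x j i
  ν : ℝ → ES N → ℝ
  ν₀ : ℝ
  ν₀_pos : 0 < ν₀
  ν_lb : ∀ t ∈ Icc (0:ℝ) T, ∀ x, ν₀ ≤ ν t x
  ellip : ∀ t ∈ Icc (0:ℝ) T, ∀ x, ∀ ξ : ES N, ν t x * ‖ξ‖ ^ 2 ≤ ∑ i, ∑ j, q t x i j * ξ i * ξ j
  /- (iii) growth conditions. -/
  C₁ : ℝ
  C₂ : ℝ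
  C₃ : ℝ
  C₁_pos : 0 < C₁
  C₂_pos : 0 < C₂
  C₃_pos : 0 < C₃
  growth_Q : ∀ t ∈ Icc (0:ℝ) T, ∀ x,
    ‖(EuclideanSpace.equiv (Fin N) ℝ).symm fun i => ∑ j, q t x i j * x j‖
      ≤ C₁ * (1 + ‖x‖ ^ 2) * ν t x
  growth_tr : ∀ t ∈ Icc (0:ℝ) T, ∀ x, (∑ i, q t x i i) ≤ C₂ * (1 + ‖x‖ ^ 2) * ν t x
  growth_b : ∀ t ∈ Icc (0:ℝ) T, ∀ x, (∑ j, b t x j * x j) ≤ C₃ * (1 + ‖x‖ ^ 2) * ν t x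
  /- (iv) `c` is bounded from above. -/
  c₀ : ℝ
  c_ub : ∀ t ∈ Icc (0:ℝ) T, ∀ x, c t x ≤ c₀
  /- (v) bounds on the derivatives of the diffusion coefficients. -/
  K₁ : ℝ
  K₂ : ℝ
  K₃ : ℝ
  K₁_pos : 0 < K₁
  K₂_pos : 0 < K₂
  K₃_pos : 0 < K₃
  dq1_bound : ∀ t ∈ Icc (0:ℝ) T, ∀ x i j k, |pd1 (fun y => q t y i j) k x| ≤ K₁ * ν t x
  dq3_bound : ∀ t ∈ Icc (0:ℝ) T, ∀ x i j k l m, |pd3 (fun y => q t y i j) k l m x| ≤ K₃ * ν t x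
  dq2_quad : ∀ t ∈ Icc (0:ℝ) T, ∀ x, ∀ Ξ : Fin N → Fin N → ℝ, (∀ h k, Ξ h k = Ξ k h) →
    (∑ h, ∑ k, ∑ l, ∑ m, pd2 (fun y => q t y h k) l m x * Ξ h k * Ξ l m)
      ≤ K₂ * ν t x * ∑ h, ∑ k, Ξ h k ^ 2
  /- (vi) dissipativity and bounds on the derivatives of the drift and of `c`. -/
  d : ℝ → ES N → ℝ
  r : ℝ → ES N → ℝ
  ϱ : ℝ → ES N → ℝ
  ϱ₀ : ℝ
  ϱ₀_pos : 0 < ϱ₀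
  ϱ_lb : ∀ t ∈ Icc (0:ℝ) T, ∀ x, ϱ₀ ≤ ϱ t x
  L₁ : ℝ
  L₂ : ℝ
  L₃ : ℝ
  L₁_pos : 0 < L₁
  L₂_pos : 0 < L₂
  L₃_pos : 0 < L₃
  dissip : ∀ t ∈ Icc (0:ℝ) T, ∀ x, ∀ ξ : ES N,
    (∑ i, ∑ j, pd1 (fun y => b t y i) j x * ξ j * ξ i) ≤ d t x * ‖ξ‖ ^ 2
  db2_bound : ∀ t ∈ Icc (0:ℝ) T, ∀ x j k l, |pd2 (fun y => b t y j) k l x| ≤ r t x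
  db3_bound : ∀ t ∈ Icc (0:ℝ) T, ∀ x j k l m, |pd3 (fun y => b t y j) k l m x| ≤ r t x
  dc1_bound : ∀ t ∈ Icc (0:ℝ) T, ∀ x k, |pd1 (c t) k x| ≤ ϱ t x
  dc2_bound : ∀ t ∈ Icc (0:ℝ) T, ∀ x k l, |pd2 (c t) k l x| ≤ ϱ t x
  dc3_bound : ∀ t ∈ Icc (0:ℝ) T, ∀ x k l m, |pd3 (c t) k l m x| ≤ ϱ t x
  funz : ∀ t ∈ Icc (0:ℝ) T, ∀ x, d t x + L₁ * r t x + L₂ * ϱ t x ^ 2 ≤ L₃ * ν t x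
  /- (vii) existence of a Lyapunov function. -/
  liap : ∃ φ : ES N → ℝ, ∃ lam : ℝ, 0 < lam ∧ (∀ x, 0 < φ x) ∧ ContDiff ℝ 2 φ ∧
    Tendsto φ (cocompact (ES N)) atTop ∧
    ∃ M : ℝ, ∀ t ∈ Icc (0:ℝ) T, ∀ x, Aop q b c φ t x - lam * φ x ≤ M

/-- `u` is a bounded classical solution on `[s,τ] × ℝ^N` of the homogeneous Cauchy problem
`D_t u = 𝒜 u`, `u(s,·) = f`: it is bounded and continuous on `[s,τ] × ℝ^N`, continuously
differentiable once in time and twice in space on `(s,τ] × ℝ^N`, satisfies the equation there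
and attains the initial datum `f` at time `s`. -/
def IsBCSol {N : ℕ} (q : ℝ → ES N → Fin N → Fin N → ℝ) (b : ℝ → ES N → Fin N → ℝ)
    (c : ℝ → ES N → ℝ) (s τ : ℝ) (f : ES N → ℝ) (u : ℝ → ES N → ℝ) : Prop :=
  (∃ M, ∀ t ∈ Icc s τ, ∀ x, |u t x| ≤ M) ∧
  ContinuousOn (fun p : ℝ × ES N => u p.1 p.2) (Icc s τ ×ˢ univ) ∧
  (∀ t ∈ Ioc s τ, ContDiff ℝ 2 (u t)) ∧
  (∀ x, ∀ t ∈ Ioc s τ, DifferentiableAt ℝ (fun t' => u t' x) t) ∧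
  ContinuousOn (fun p : ℝ × ES N => deriv (fun t' => u t' p.2) p.1) (Ioc s τ ×ˢ univ) ∧
  (∀ i, ContinuousOn (fun p : ℝ × ES N => pd1 (u p.1) i p.2) (Ioc s τ ×ˢ univ)) ∧
  (∀ i j, ContinuousOn (fun p : ℝ × ES N => pd2 (u p.1) i j p.2) (Ioc s τ ×ˢ univ)) ∧
  (∀ t ∈ Ioc s τ, ∀ x, deriv (fun t' => u t' x) t = Aop q b c (u t) t x) ∧
  (∀ x, u s x = f x)

/-- `u` is a bounded classical solution on `[0,T] × ℝ^N` of the nonhomogeneous Cauchy problem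
`D_t u = 𝒜 u + g`, `u(0,·) = f`, continuously differentiable once in time and twice in space
on all of `[0,T] × ℝ^N`. -/
def IsBCSolInhom {N : ℕ} (q : ℝ → ES N → Fin N → Fin N → ℝ) (b : ℝ → ES N → Fin N → ℝ)
    (c : ℝ → ES N → ℝ) (T : ℝ) (f : ES N → ℝ) (g : ℝ → ES N → ℝ) (u : ℝ → ES N → ℝ) : Prop :=
  (∃ M, ∀ t ∈ Icc (0:ℝ) T, ∀ x, |u t x| ≤ M) ∧
  (∀ t ∈ Icc (0:ℝ) T, ContDiff ℝ 2 (u t)) ∧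
  (∀ x, ∀ t ∈ Icc (0:ℝ) T, DifferentiableWithinAt ℝ (fun t' => u t' x) (Icc (0:ℝ) T) t) ∧
  ContinuousOn (fun p : ℝ × ES N => derivWithin (fun t' => u t' p.2) (Icc (0:ℝ) T) p.1)
    (Icc (0:ℝ) T ×ˢ univ) ∧
  (∀ i, ContinuousOn (fun p : ℝ × ES N => pd1 (u p.1) i p.2) (Icc (0:ℝ) T ×ˢ univ)) ∧
  (∀ i j, ContinuousOn (fun p : ℝ × ES N => pd2 (u p.1) i j p.2) (Icc (0:ℝ) T ×ˢ univ)) ∧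
  (∀ t ∈ Icc (0:ℝ) T, ∀ x,
    derivWithin (fun t' => u t' x) (Icc (0:ℝ) T) t = Aop q b c (u t) t x + g t x) ∧
  (∀ x, u 0 x = f x)

/-- Extended-real sup norm of the `k`-th derivative. -/
def supNormE {N : ℕ} (k : ℕ) (f : ES N → ℝ) : ℝ≥0∞ :=
  ⨆ x : ES N, ENNReal.ofReal ‖iteratedFDeriv ℝ k f x‖

/-- Extended-real `γ`-Hölder seminorm of the `k`-th derivative. -/
def holderSemiE {N : ℕ} (k : ℕ) (γ : ℝ) (f : ES N → ℝ) : ℝ≥0∞ :=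
  ⨆ (x : ES N) (y : ES N) (_ : x ≠ y),
    ENNReal.ofReal (‖iteratedFDeriv ℝ k f x - iteratedFDeriv ℝ k f y‖ / ‖x - y‖ ^ γ)

/-- The `C^α_b(ℝ^N)` norm (valued in `[0,∞]`): sup norms of the derivatives up to order `⌊α⌋`
plus, when `α ∉ ℕ`, the `(α-⌊α⌋)`-Hölder seminorm of the `⌊α⌋`-th order derivatives. -/
def CbNorm {N : ℕ} (α : ℝ) (f : ES N → ℝ) : ℝ≥0∞ :=
  (∑ k ∈ Finset.range (⌊α⌋₊ + 1), supNormE k f) +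
    (if (⌊α⌋₊ : ℝ) = α then 0 else holderSemiE ⌊α⌋₊ (α - ⌊α⌋₊) f)

/-- Membership in `C^α_b(ℝ^N)`. -/
def MemCb {N : ℕ} (α : ℝ) (f : ES N → ℝ) : Prop :=
  ContDiff ℝ (⌊α⌋₊ : ℕ) f ∧ CbNorm α f ≠ ⊤


/-! ### Auxiliary lemmas for the maximum principle -/

section MaxPrincipleAux

/-- If `g` has a local max at `0`, `g' 0 = 0` and `g'` is differentiable at `0`, then the
second derivative is nonpositive. -/
theorem aux_second_le_zero {g g' : ℝ → ℝ} {c : ℝ}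
    (hg : ∀ r, HasDerivAt g (g' r) r) (hg' : HasDerivAt g' c 0)
    (hmax : IsLocalMax g 0) (h0 : g' 0 = 0) : c ≤ 0 := by
  by_contra hc
  push_neg at hc
  have hslope := hasDerivAt_iff_tendsto_slope.mp hg'
  have hpos : ∀ᶠ r in 𝓝[>] (0:ℝ), 0 < slope g' 0 r := by
    have : ∀ᶠ r in 𝓝[≠] (0:ℝ), 0 < slope g' 0 r :=
      hslope.eventually (eventually_gt_nhds hc)
    exact this.filter_mono (nhdsWithin_mono _ fun r hr => ne_of_gt hr)
  rw [eventually_iff, mem_nhdsGT_iff_exists_Ioo_subset] at hpos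
  obtain ⟨δ, hδ, hsub⟩ := hpos
  obtain ⟨δ₂, hδ₂, hm⟩ := Metric.eventually_nhds_iff.mp hmax
  set r := min δ δ₂ / 2 with hr
  have hr0 : 0 < r := by
    have : 0 < min δ δ₂ := lt_min hδ hδ₂
    simp only [hr]; linarith
  have hrδ : r < δ := by
    simp only [hr]; linarith [min_le_left δ δ₂]
  have hrδ₂ : r < δ₂ := by simp only [hr]; linarith [min_le_right δ δ₂]
  have hmono : StrictMonoOn g (Icc 0 r) := by
    apply strictMonoOn_of_deriv_pos (convex_Icc _ _)
      (fun x _ => (hg x).continuousAt.continuousWithinAt)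
    intro x hxmem
    rw [interior_Icc] at hxmem
    have hx' : x ∈ Ioo 0 δ := ⟨hxmem.1, lt_trans hxmem.2 hrδ⟩
    have := hsub hx'
    rw [(hg x).deriv]
    have hs : slope g' 0 x = g' x / x := by
      simp [slope_def_field, h0]
    rw [mem_setOf_eq, hs] at this
    have := mul_pos this hxmem.1
    rwa [div_mul_cancel₀] at this
    exact ne_of_gt hxmem.1
  have hlt : g 0 < g r := hmono (left_mem_Icc.mpr hr0.le) (right_mem_Icc.mpr hr0.le) hr0
  have : g r ≤ g 0 := by
    apply hm; simp [abs_of_pos hr0]; linarith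
  linarith

/-- At a local maximum of a `C²` function the second derivative in any direction is
nonpositive. -/
theorem aux_hessian_dir {N : ℕ} {w : EuclideanSpace ℝ (Fin N) → ℝ}
    (hw : ContDiff ℝ 2 w) {x₀ : EuclideanSpace ℝ (Fin N)} (hmax : IsLocalMax w x₀)
    (ξ : EuclideanSpace ℝ (Fin N)) : fderiv ℝ (fderiv ℝ w) x₀ ξ ξ ≤ 0 := by
  set L : ℝ → EuclideanSpace ℝ (Fin N) := fun r => x₀ + r • ξ with hL
  have hLd : ∀ r : ℝ, HasDerivAt L ξ r := fun r => by
    simpa only [id, one_smul] using ((hasDerivAt_id r).smul_const ξ).const_add x₀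
  have hwd : Differentiable ℝ w := hw.differentiable two_ne_zero
  have hg : ∀ r, HasDerivAt (fun r => w (L r)) (fderiv ℝ w (L r) ξ) r := fun r =>
    (hwd (L r)).hasFDerivAt.comp_hasDerivAt r (hLd r)
  have hf' : ContDiff ℝ 1 (fderiv ℝ w) := hw.fderiv_right le_rfl
  have hcomp : HasDerivAt (fun r => fderiv ℝ w (L r)) (fderiv ℝ (fderiv ℝ w) x₀ ξ) 0 := by
    have h1 : HasFDerivAt (fderiv ℝ w) (fderiv ℝ (fderiv ℝ w) (L 0)) (L 0) :=
      ((hf'.differentiable one_ne_zero) (L 0)).hasFDerivAt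
    have := h1.comp_hasDerivAt 0 (hLd 0)
    have hL0 : L 0 = x₀ := by simp [hL]
    rw [hL0] at this
    exact this
  have hg' : HasDerivAt (fun r => fderiv ℝ w (L r) ξ) (fderiv ℝ (fderiv ℝ w) x₀ ξ ξ) 0 := by
    have := hcomp.clm_apply (hasDerivAt_const 0 ξ)
    simpa using this
  have hmax0 : IsLocalMax (fun r => w (L r)) 0 := by
    have hcont : ContinuousAt L 0 := (hLd 0).continuousAt
    have hL0 : L 0 = x₀ := by simp [hL]
    have := hcont.tendsto
    rw [hL0] at this
    have hev := this.eventually hmax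
    simpa [IsLocalMax, IsMaxFilter, hL0] using hev
  have h0 : fderiv ℝ w (L 0) ξ = 0 := by
    have : fderiv ℝ w x₀ = 0 := hmax.fderiv_eq_zero
    simp [hL, this]
  exact aux_second_le_zero hg hg' hmax0 h0

/-- Trace of a positive semidefinite matrix against a nonpositive quadratic form. -/
theorem aux_trace_le_zero {N : ℕ} (Q : Matrix (Fin N) (Fin N) ℝ) (hQ : Q.PosSemidef)
    (B : EuclideanSpace ℝ (Fin N) →L[ℝ] EuclideanSpace ℝ (Fin N) →L[ℝ] ℝ)
    (hB : ∀ ξ, B ξ ξ ≤ 0) :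
    ∑ i, ∑ j, Q i j * B (EuclideanSpace.single i 1) (EuclideanSpace.single j 1) ≤ 0 := by
  obtain ⟨C, hC⟩ : ∃ C : Matrix (Fin N) (Fin N) ℝ, Q = Matrix.conjTranspose C * C := by
    classical
    open scoped MatrixOrder in
    obtain ⟨X, hX, -, hXQ⟩ :=
      sub_zero Q ▸ CFC.exists_sqrt_of_isSelfAdjoint_of_quasispectrumRestricts hQ.isHermitian
        (QuasispectrumRestricts.nnreal_of_nonneg hQ.nonneg)
    rw [sub_zero] at hXQ
    exact ⟨X, by rw [← hXQ, ← Matrix.star_eq_conjTranspose, hX.star_eq]⟩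
  have hentry : ∀ i j, Q i j = ∑ k, C k i * C k j := by
    intro i j
    rw [hC]
    simp [Matrix.mul_apply, Matrix.conjTranspose_apply, mul_comm]
  set e : Fin N → EuclideanSpace ℝ (Fin N) := fun i => EuclideanSpace.single i 1 with he
  set v : Fin N → EuclideanSpace ℝ (Fin N) := fun k => ∑ i, C k i • e i with hv
  have h1 : ∀ k η, B (v k) η = ∑ i, C k i * B (e i) η := by
    intro k η
    rw [hv]
    simp only [map_sum, ContinuousLinearMap.map_smul]
    rw [ContinuousLinearMap.sum_apply]
    simp [ContinuousLinearMap.smul_apply]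
  have h2 : ∀ k, B (v k) (v k) = ∑ i, ∑ j, C k i * C k j * B (e i) (e j) := by
    intro k
    rw [h1]
    refine Finset.sum_congr rfl fun i _ => ?_
    rw [hv, map_sum, Finset.mul_sum]
    refine Finset.sum_congr rfl fun j _ => ?_
    rw [ContinuousLinearMap.map_smul, smul_eq_mul]
    ring
  have key : ∑ i, ∑ j, Q i j * B (e i) (e j) = ∑ k, B (v k) (v k) := by
    calc ∑ i, ∑ j, Q i j * B (e i) (e j)
        = ∑ i, ∑ j, ∑ k, C k i * C k j * B (e i) (e j) :=
          Finset.sum_congr rfl fun i _ => Finset.sum_congr rfl fun j _ => by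
            rw [hentry, Finset.sum_mul]
      _ = ∑ i, ∑ k, ∑ j, C k i * C k j * B (e i) (e j) :=
          Finset.sum_congr rfl fun i _ => by rw [Finset.sum_comm]
      _ = ∑ k, ∑ i, ∑ j, C k i * C k j * B (e i) (e j) := by rw [Finset.sum_comm]
      _ = ∑ k, B (v k) (v k) := Finset.sum_congr rfl fun k _ => (h2 k).symm
  rw [key]
  exact Finset.sum_nonpos fun k _ => hB (v k)

theorem pd1_contDiff {N : ℕ} {f : ES N → ℝ} (hf : ContDiff ℝ 2 f) (j : Fin N) :
    ContDiff ℝ 1 (pd1 f j) := by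
  have h1 : ContDiff ℝ 1 (fderiv ℝ f) := hf.fderiv_right le_rfl
  exact (ContinuousLinearMap.apply ℝ ℝ (EuclideanSpace.single j 1)).contDiff.comp h1

theorem pd2_eq_fderiv2 {N : ℕ} {f : ES N → ℝ} (hf : ContDiff ℝ 2 f) (i j : Fin N) (x : ES N) :
    pd2 f i j x
      = fderiv ℝ (fderiv ℝ f) x (EuclideanSpace.single i 1) (EuclideanSpace.single j 1) := by
  have h1 : ContDiff ℝ 1 (fderiv ℝ f) := hf.fderiv_right le_rfl
  have hd : DifferentiableAt ℝ (fderiv ℝ f) x := (h1.differentiable one_ne_zero) x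
  unfold pd2 pd1
  rw [fderiv_clm_apply hd (differentiableAt_const _)]
  simp

theorem pd1_comb {N : ℕ} {u φ : ES N → ℝ} (hu : ContDiff ℝ 2 u) (hφ : ContDiff ℝ 2 φ)
    (A B K : ℝ) (i : Fin N) (x : ES N) :
    pd1 (fun y => A * u y - B * (φ y + K)) i x = A * pd1 u i x - B * pd1 φ i x := by
  unfold pd1
  have hdu : DifferentiableAt ℝ u x := hu.differentiable two_ne_zero x
  have hdφ : DifferentiableAt ℝ φ x := hφ.differentiable two_ne_zero x
  have : (fun y => A * u y - B * (φ y + K)) = fun y => A * u y - (B * φ y + B * K) := by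
    ext y; ring
  rw [this, fderiv_fun_sub (hdu.const_mul A) ((hdφ.const_mul B).add_const _)]
  rw [fderiv_const_mul hdu, fderiv_add_const, fderiv_const_mul hdφ]
  simp

theorem pd2_comb {N : ℕ} {u φ : ES N → ℝ} (hu : ContDiff ℝ 2 u) (hφ : ContDiff ℝ 2 φ)
    (A B K : ℝ) (i j : Fin N) (x : ES N) :
    pd2 (fun y => A * u y - B * (φ y + K)) i j x = A * pd2 u i j x - B * pd2 φ i j x := by
  unfold pd2
  have heq : pd1 (fun y => A * u y - B * (φ y + K)) j
      = fun y => A * pd1 u j y - B * pd1 φ j y :=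
    funext fun y => pd1_comb hu hφ A B K j y
  rw [heq]
  have hdu : DifferentiableAt ℝ (pd1 u j) x := (pd1_contDiff hu j).differentiable one_ne_zero x
  have hdφ : DifferentiableAt ℝ (pd1 φ j) x := (pd1_contDiff hφ j).differentiable one_ne_zero x
  show fderiv ℝ (fun y => A * pd1 u j y - B * pd1 φ j y) x (EuclideanSpace.single i 1)
      = A * pd2 u i j x - B * pd2 φ i j x
  rw [fderiv_fun_sub (hdu.const_mul A) (hdφ.const_mul B), fderiv_const_mul hdu, fderiv_const_mul hdφ]
  simp [pd2, pd1]

theorem comb_contDiff {N : ℕ} {u φ : ES N → ℝ} (hu : ContDiff ℝ 2 u) (hφ : ContDiff ℝ 2 φ)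
    (A B K : ℝ) : ContDiff ℝ 2 (fun y => A * u y - B * (φ y + K)) :=
  ((contDiff_const.mul hu).sub (contDiff_const.mul (hφ.add contDiff_const)))

theorem aux_deriv_nonneg_of_max_left {g : ℝ → ℝ} {g' s t₀ : ℝ} (hst : s < t₀)
    (hmax : ∀ t ∈ Ioo s t₀, g t ≤ g t₀) (hd : HasDerivAt g g' t₀) : 0 ≤ g' := by
  have hsl := hasDerivAt_iff_tendsto_slope.mp hd
  have h1 : Tendsto (slope g t₀) (𝓝[<] t₀) (𝓝 g') :=
    hsl.mono_left (nhdsWithin_mono _ fun t ht => ne_of_lt ht)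
  refine ge_of_tendsto h1 ?_
  have hIoo : Ioo s t₀ ∈ 𝓝[<] t₀ := Ioo_mem_nhdsLT hst
  filter_upwards [hIoo] with t htm
  have h2 : g t - g t₀ ≤ 0 := sub_nonpos.mpr (hmax t htm)
  have h3 : t - t₀ < 0 := sub_neg.mpr htm.2
  rw [slope_def_field]
  have := div_nonneg (neg_nonneg.mpr h2) (neg_nonneg.mpr h3.le)
  rw [neg_div_neg_eq] at this
  simpa [div_eq_div_iff] using this

end MaxPrincipleAux

/-- Proposition `maximum` of the paper. Under Hypotheses (H), if
`u ∈ C_b([s,T] × ℝ^N) ∩ C^{1,2}((s,T] × ℝ^N)` satisfies `D_t u - 𝒜 u ≤ 0` on `(s,T] × ℝ^N`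
and `u(s,·) ≤ 0`, then `u ≤ 0` on `[s,T] × ℝ^N`. -/
theorem maximum_principle_smooth {N : ℕ} {T : ℝ} {q : ℝ → ES N → Fin N → Fin N → ℝ}
    {b : ℝ → ES N → Fin N → ℝ} {c : ℝ → ES N → ℝ} (H : Hyp N T q b c)
    (s : ℝ) (hs : s ∈ Ico (0:ℝ) T) (u : ℝ → ES N → ℝ)
    (hbd : ∃ M, ∀ t ∈ Icc s T, ∀ x, |u t x| ≤ M)
    (hcont : ContinuousOn (fun p : ℝ × ES N => u p.1 p.2) (Icc s T ×ˢ univ))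
    (hx : ∀ t ∈ Ioc s T, ContDiff ℝ 2 (u t))
    (ht : ∀ x, ∀ t ∈ Ioc s T, DifferentiableAt ℝ (fun t' => u t' x) t)
    (hdtc : ContinuousOn (fun p : ℝ × ES N => deriv (fun t' => u t' p.2) p.1) (Ioc s T ×ˢ univ))
    (hd1c : ∀ i, ContinuousOn (fun p : ℝ × ES N => pd1 (u p.1) i p.2) (Ioc s T ×ˢ univ))
    (hd2c : ∀ i j, ContinuousOn (fun p : ℝ × ES N => pd2 (u p.1) i j p.2) (Ioc s T ×ˢ univ))
    (hineq : ∀ t ∈ Ioc s T, ∀ x, deriv (fun t' => u t' x) t - Aop q b c (u t) t x ≤ 0)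
    (hinit : ∀ x, u s x ≤ 0) :
    ∀ t ∈ Icc s T, ∀ x, u t x ≤ 0 := by
  obtain ⟨Mu, hMu⟩ := hbd
  obtain ⟨φ, lam, hlam, hφpos, hφC2, hφtend, M, hM⟩ := H.liap
  set a : ℝ := max H.c₀ 0 with hadef
  have ha0 : 0 ≤ a := le_max_right _ _
  set K : ℝ := (max M 0 + 1) / lam with hKdef
  have hK0 : 0 < K := by
    apply div_pos _ hlam
    have := le_max_right M 0; linarith
  have hlamK : lam * K = max M 0 + 1 := by
    rw [hKdef]
    field_simp
  have key : ∀ ε : ℝ, 0 < ε → ∀ t ∈ Icc s T, ∀ x : ES N,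
      Real.exp (-a*(t-s)) * u t x - ε * Real.exp (lam*(t-s)) * (φ x + K) ≤ 0 := by
    intro ε hε
    by_contra hcon
    push_neg at hcon
    obtain ⟨t₁, ht₁, x₁, hpos1⟩ := hcon
    set v : ℝ × ES N → ℝ := fun p =>
      Real.exp (-a*(p.1-s)) * u p.1 p.2 - ε * Real.exp (lam*(p.1-s)) * (φ p.2 + K) with hvdef
    have hpos1' : 0 < v (t₁, x₁) := hpos1
    -- the function v is bounded above by Mu - ε φ
    have hvle : ∀ t ∈ Icc s T, ∀ x, v (t, x) ≤ Mu - ε * φ x := by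
      intro t htm x
      have hE1 : Real.exp (-a*(t-s)) ≤ 1 := by
        rw [← Real.exp_zero]
        apply Real.exp_le_exp.mpr
        nlinarith [htm.1]
      have hF1 : 1 ≤ Real.exp (lam*(t-s)) := by
        rw [← Real.exp_zero]
        apply Real.exp_le_exp.mpr
        nlinarith [htm.1]
      have hEpos := Real.exp_pos (-a*(t-s))
      have h1 : Real.exp (-a*(t-s)) * u t x ≤ Mu := by
        have habs := abs_le.mp (hMu t htm x)
        have hMu0 : 0 ≤ Mu := le_trans (abs_nonneg _) (hMu t htm x)
        nlinarith
      have h2 : ε * φ x ≤ ε * Real.exp (lam*(t-s)) * (φ x + K) := by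
        have ha' : 0 ≤ ε * (Real.exp (lam*(t-s)) - 1) * φ x :=
          mul_nonneg (mul_nonneg hε.le (by linarith)) (hφpos x).le
        have hb' : 0 ≤ ε * Real.exp (lam*(t-s)) * K :=
          mul_nonneg (mul_nonneg hε.le (by linarith)) hK0.le
        nlinarith [ha', hb']
      show Real.exp (-a*(t-s)) * u t x - ε * Real.exp (lam*(t-s)) * (φ x + K) ≤ Mu - ε * φ x
      linarith
    -- outside a compact set, v ≤ -1
    have hcoc := hφtend.eventually (eventually_ge_atTop ((Mu+1)/ε))
    rw [Filter.eventually_iff, Filter.mem_cocompact] at hcoc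
    obtain ⟨Kc, hKcc, hKcsub⟩ := hcoc
    have hout : ∀ t ∈ Icc s T, ∀ x, x ∉ Kc → v (t,x) ≤ -1 := by
      intro t htm x hxn
      have hφx : (Mu+1)/ε ≤ φ x := hKcsub hxn
      have h1 : Mu + 1 ≤ ε * φ x := by
        rw [div_le_iff₀ hε] at hφx
        nlinarith
      linarith [hvle t htm x]
    have hx₁ : x₁ ∈ Kc := by
      by_contra hn
      have := hout t₁ ht₁ x₁ hn
      linarith
    -- v is continuous on the strip
    have hφc : Continuous φ := hφC2.continuous
    have hvcont : ContinuousOn v (Icc s T ×ˢ univ) := by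
      apply ContinuousOn.sub
      · exact ((Real.continuous_exp.comp
          (continuous_const.mul (continuous_fst.sub continuous_const))).continuousOn).mul hcont
      · apply Continuous.continuousOn
        exact (continuous_const.mul (Real.continuous_exp.comp
          (continuous_const.mul (continuous_fst.sub continuous_const)))).mul
          ((hφc.comp continuous_snd).add continuous_const)
    -- maximize v over the compact set
    have hCcomp : IsCompact (Icc s T ×ˢ Kc) := isCompact_Icc.prod hKcc
    have hCne : (Icc s T ×ˢ Kc).Nonempty := ⟨(t₁,x₁), ⟨ht₁, hx₁⟩⟩
    obtain ⟨p₀, hp₀mem, hp₀max⟩ := hCcomp.exists_isMaxOn hCne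
      (hvcont.mono (fun p hp => ⟨hp.1, mem_univ _⟩))
    obtain ⟨t₀, x₀⟩ := p₀
    have ht₀ : t₀ ∈ Icc s T := hp₀mem.1
    have hm : 0 < v (t₀,x₀) := lt_of_lt_of_le hpos1' (hp₀max ⟨ht₁, hx₁⟩)
    have hgmax : ∀ t ∈ Icc s T, ∀ x, v (t,x) ≤ v (t₀,x₀) := by
      intro t htm x
      by_cases hxK : x ∈ Kc
      · exact hp₀max ⟨htm, hxK⟩
      · linarith [hout t htm x hxK]
    have ht₀s : s < t₀ := by
      rcases lt_or_eq_of_le ht₀.1 with h|h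
      · exact h
      · exfalso
        have hv0 : v (s, x₀) ≤ 0 := by
          have h1 : v (s, x₀)
              = Real.exp (-a*(s-s)) * u s x₀ - ε * Real.exp (lam*(s-s)) * (φ x₀ + K) := rfl
          rw [h1]
          simp only [sub_self, mul_zero, Real.exp_zero]
          nlinarith [hinit x₀, hφpos x₀]
        rw [h] at hv0
        linarith
    have ht₀Ioc : t₀ ∈ Ioc s T := ⟨ht₀s, ht₀.2⟩
    have ht₀0T : t₀ ∈ Icc (0:ℝ) T := ⟨le_trans hs.1 ht₀.1, ht₀.2⟩
    -- abbreviations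
    set E : ℝ := Real.exp (-a*(t₀-s)) with hEdef
    set F : ℝ := Real.exp (lam*(t₀-s)) with hFdef
    have hEpos : 0 < E := Real.exp_pos _
    have hF1 : 1 ≤ F := by
      rw [hFdef, ← Real.exp_zero]
      apply Real.exp_le_exp.mpr
      nlinarith [ht₀.1]
    have hFpos : 0 < F := lt_of_lt_of_le one_pos hF1
    -- time derivative at the maximum point
    set u' : ℝ := deriv (fun t' => u t' x₀) t₀ with hu'def
    have hud : HasDerivAt (fun t' => u t' x₀) u' t₀ := (ht x₀ t₀ ht₀Ioc).hasDerivAt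
    have hEd : HasDerivAt (fun t => Real.exp (-a*(t-s))) (E * (-a)) t₀ := by
      have h0 : HasDerivAt (fun t : ℝ => -a*(t-s)) (-a) t₀ := by
        simpa using ((hasDerivAt_id t₀).sub_const s).const_mul (-a)
      simpa [hEdef] using h0.exp
    have hFd : HasDerivAt (fun t => Real.exp (lam*(t-s))) (F * lam) t₀ := by
      have h0 : HasDerivAt (fun t : ℝ => lam*(t-s)) lam t₀ := by
        simpa using ((hasDerivAt_id t₀).sub_const s).const_mul lam
      simpa [hFdef] using h0.exp
    have hgd : HasDerivAt (fun t => v (t, x₀))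
        (E * (-a) * u t₀ x₀ + E * u' - ε * (F * lam) * (φ x₀ + K)) t₀ := by
      have h1 := (hEd.mul hud).sub ((hFd.const_mul ε).mul_const (φ x₀ + K))
      exact h1
    have hDge : 0 ≤ E * (-a) * u t₀ x₀ + E * u' - ε * (F * lam) * (φ x₀ + K) := by
      apply aux_deriv_nonneg_of_max_left ht₀s _ hgd
      intro t htm
      exact hgmax t ⟨htm.1.le, le_trans htm.2.le ht₀.2⟩ x₀
    -- space: the section w = v(t₀, ·)
    have huC2 : ContDiff ℝ 2 (u t₀) := hx t₀ ht₀Ioc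
    set w : ES N → ℝ := fun y => E * u t₀ y - (ε*F) * (φ y + K) with hwdef
    have hwv : ∀ y, w y = v (t₀, y) := by
      intro y
      show E * u t₀ y - (ε*F) * (φ y + K) = E * u t₀ y - ε * F * (φ y + K)
      ring
    have hwC2 : ContDiff ℝ 2 w := comb_contDiff huC2 hφC2 E (ε*F) K
    have hwmax : IsLocalMax w x₀ := by
      apply Filter.Eventually.of_forall
      intro y
      rw [hwv y, hwv x₀]
      exact hgmax t₀ ht₀ y
    have hfd0 : fderiv ℝ w x₀ = 0 := hwmax.fderiv_eq_zero
    have hw1 : ∀ i, E * pd1 (u t₀) i x₀ - (ε*F) * pd1 φ i x₀ = 0 := by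
      intro i
      have h0 : pd1 w i x₀ = 0 := by simp [pd1, hfd0]
      rw [hwdef] at h0
      rw [pd1_comb huC2 hφC2 E (ε*F) K i x₀] at h0
      exact h0
    -- Hessian step
    have hB : ∀ ξ, fderiv ℝ (fderiv ℝ w) x₀ ξ ξ ≤ 0 := fun ξ => aux_hessian_dir hwC2 hwmax ξ
    set Qm : Matrix (Fin N) (Fin N) ℝ := Matrix.of (fun i j => q t₀ x₀ i j) with hQmdef
    have hQpsd : Qm.PosSemidef := by
      refine Matrix.PosSemidef.of_dotProduct_mulVec_nonneg ?_ ?_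
      · ext i j
        simp only [Matrix.conjTranspose_apply, hQmdef, Matrix.of_apply, star_trivial]
        exact H.q_symm t₀ ht₀0T x₀ j i
      · intro y
        set ξ : ES N := (EuclideanSpace.equiv (Fin N) ℝ).symm y with hξdef
        have hξy : ∀ i, ξ i = y i := fun i => rfl
        have hell := H.ellip t₀ ht₀0T x₀ ξ
        have hν0 : (0:ℝ) ≤ H.ν t₀ x₀ := le_trans H.ν₀_pos.le (H.ν_lb t₀ ht₀0T x₀)
        have hq : (0:ℝ) ≤ ∑ i, ∑ j, q t₀ x₀ i j * ξ i * ξ j :=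
          le_trans (mul_nonneg hν0 (sq_nonneg _)) hell
        have hrw : dotProduct (star y) (Qm.mulVec y)
            = ∑ i, ∑ j, q t₀ x₀ i j * ξ i * ξ j := by
          simp only [dotProduct, Matrix.mulVec, star_trivial, hQmdef, Matrix.of_apply,
            dotProduct]
          refine Finset.sum_congr rfl fun i _ => ?_
          rw [Finset.mul_sum]
          refine Finset.sum_congr rfl fun j _ => ?_
          rw [hξy i, hξy j]
          ring
        rw [hrw]
        exact hq
    have htr := aux_trace_le_zero Qm hQpsd (fderiv ℝ (fderiv ℝ w) x₀) hB
    have hw2 : ∑ i, ∑ j, q t₀ x₀ i j *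
        (E * pd2 (u t₀) i j x₀ - (ε*F) * pd2 φ i j x₀) ≤ 0 := by
      have heq : ∀ i j, E * pd2 (u t₀) i j x₀ - (ε*F) * pd2 φ i j x₀
          = fderiv ℝ (fderiv ℝ w) x₀ (EuclideanSpace.single i 1) (EuclideanSpace.single j 1) := by
        intro i j
        rw [← pd2_comb huC2 hφC2 E (ε*F) K i j x₀, ← pd2_eq_fderiv2 hwC2 i j x₀]
      calc ∑ i, ∑ j, q t₀ x₀ i j * (E * pd2 (u t₀) i j x₀ - (ε*F) * pd2 φ i j x₀)
          = ∑ i, ∑ j, Qm i j * fderiv ℝ (fderiv ℝ w) x₀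
              (EuclideanSpace.single i 1) (EuclideanSpace.single j 1) :=
            Finset.sum_congr rfl fun i _ => Finset.sum_congr rfl fun j _ => by
              rw [heq i j]; rfl
        _ ≤ 0 := htr
    -- unfold the PDE inequality and the Lyapunov bound
    have hpde := hineq t₀ ht₀Ioc x₀
    rw [Aop] at hpde
    have hlyap := hM t₀ ht₀0T x₀
    rw [Aop] at hlyap
    -- notation for the sums
    set S2u : ℝ := ∑ i, ∑ j, q t₀ x₀ i j * pd2 (u t₀) i j x₀ with hS2u
    set S1u : ℝ := ∑ j, b t₀ x₀ j * pd1 (u t₀) j x₀ with hS1u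
    set S2φ : ℝ := ∑ i, ∑ j, q t₀ x₀ i j * pd2 φ i j x₀ with hS2φ
    set S1φ : ℝ := ∑ j, b t₀ x₀ j * pd1 φ j x₀ with hS1φ
    -- gradient identity summed against b
    have h3 : E * S1u - (ε*F) * S1φ = 0 := by
      rw [hS1u, hS1φ, Finset.mul_sum, Finset.mul_sum, ← Finset.sum_sub_distrib]
      apply Finset.sum_eq_zero
      intro j _
      have := hw1 j
      linear_combination (b t₀ x₀ j) * this
    -- hessian inequality summed against q
    have h4 : E * S2u - (ε*F) * S2φ ≤ 0 := by
      have hexp : ∑ i, ∑ j, q t₀ x₀ i j * (E * pd2 (u t₀) i j x₀ - (ε*F) * pd2 φ i j x₀)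
          = E * S2u - (ε*F) * S2φ := by
        rw [hS2u, hS2φ, Finset.mul_sum, Finset.mul_sum, ← Finset.sum_sub_distrib]
        refine Finset.sum_congr rfl fun i _ => ?_
        rw [Finset.mul_sum, Finset.mul_sum, ← Finset.sum_sub_distrib]
        exact Finset.sum_congr rfl fun j _ => by ring
      rw [← hexp]
      exact hw2
    -- final arithmetic contradiction
    have hCa : c t₀ x₀ ≤ a := le_trans (H.c_ub t₀ ht₀0T x₀) (le_max_left _ _)
    have hMmax : M ≤ max M 0 := le_max_left _ _
    have hp1 : E * u' ≤ E * (S2u + S1u + c t₀ x₀ * u t₀ x₀) := by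
      apply mul_le_mul_of_nonneg_left _ hEpos.le
      linarith [hpde]
    have hp2 : (ε*F) * (S2φ + S1φ + c t₀ x₀ * φ x₀) ≤ (ε*F) * (M + lam * φ x₀) := by
      apply mul_le_mul_of_nonneg_left _ (by positivity)
      linarith [hlyap]
    have hmv : 0 < E * u t₀ x₀ - ε * F * (φ x₀ + K) := hm
    have hq1 : 0 ≤ (a - c t₀ x₀) * (E * u t₀ x₀ - ε * F * (φ x₀ + K)) :=
      mul_nonneg (by linarith) hmv.le
    have hq2 : 0 ≤ a * (ε * F * φ x₀) :=
      mul_nonneg ha0 (mul_nonneg (mul_nonneg hε.le hFpos.le) (hφpos x₀).le)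
    have hq3 : 0 ≤ (a - c t₀ x₀) * (ε * F * K) :=
      mul_nonneg (by linarith) (mul_nonneg (mul_nonneg hε.le hFpos.le) hK0.le)
    have hq4 : ε * F * 1 ≤ ε * F * (lam * K - M) := by
      apply mul_le_mul_of_nonneg_left _ (mul_nonneg hε.le hFpos.le)
      rw [hlamK]
      linarith
    have hεF : 0 < ε * F := mul_pos hε hFpos
    linarith [hDge, hp1, hp2, h3, h4, hq1, hq2, hq3, hq4, hεF]
  -- conclude by letting ε → 0
  intro t htm x
  have hEpos : 0 < Real.exp (-a*(t-s)) := Real.exp_pos _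
  have hcpos : 0 < Real.exp (lam*(t-s)) * (φ x + K) := by
    have h1 := hφpos x
    have h2 : 0 < φ x + K := by linarith
    exact mul_pos (Real.exp_pos _) h2
  by_contra hu0
  push_neg at hu0
  have hEu : 0 < Real.exp (-a*(t-s)) * u t x := mul_pos hEpos hu0
  set ε : ℝ := (Real.exp (-a*(t-s)) * u t x) / (2 * (Real.exp (lam*(t-s)) * (φ x + K))) with hεdef
  have hε : 0 < ε := by positivity
  have hC0 : Real.exp (lam*(t-s)) * (φ x + K) ≠ 0 := ne_of_gt hcpos
  have h3 : ε * Real.exp (lam*(t-s)) * (φ x + K)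
      = (Real.exp (-a*(t-s)) * u t x) / 2 := by
    rw [hεdef]
    have hφK : φ x + K ≠ 0 := ne_of_gt (add_pos (hφpos x) hK0)
    field_simp
  have h4 := key ε hε t htm x
  rw [h3] at h4
  linarith
end
end

section
/- Let θ ∈ (0,1) and let f ∈ M^{0,θ}([0,T]×ℝ^N). Define F(t,x) = ∫_0^t f(s,x) ds for (t,x) ∈ [0,T]×ℝ^N. Then there exists a measurable set C ⊆ [0,T], whose complement in [0,T] is Lebesgue-negligible, such that for every (t,x) ∈ C×ℝ^N the function F(·,x) is differentiable at t and D_t F(t,x) = f(t,x). -/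
open Set Filter MeasureTheory Metric
open scoped Topology ENNReal

noncomputable section

lemma ae_ftc (g : ℝ → ℝ) (hg : MeasureTheory.Integrable g) :
    ∀ᵐ t : ℝ, HasDerivAt (fun u => ∫ s in (0:ℝ)..u, g s) (g t) t := by
  filter_upwards [(Besicovitch.vitaliFamily (volume : Measure ℝ)).ae_tendsto_average_norm_sub
    hg.locallyIntegrable] with t ht
  have hA : Tendsto (fun r : ℝ => ⨍ y in closedBall t r, ‖g y - g t‖) (𝓝[>] 0) (𝓝 0) :=
    ht.comp (Besicovitch.tendsto_filterAt volume t)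
  have habs : Tendsto (fun u : ℝ => |u - t|) (𝓝[≠] t) (𝓝[>] 0) := by
    rw [tendsto_nhdsWithin_iff]
    constructor
    · have : Tendsto (fun u : ℝ => |u - t|) (𝓝 t) (𝓝 |t - t|) :=
        ((continuous_id.sub continuous_const).abs.tendsto t)
      simpa using this.mono_left nhdsWithin_le_nhds
    · filter_upwards [self_mem_nhdsWithin] with u (hu : u ≠ t)
      exact abs_pos.2 (sub_ne_zero.2 hu)
  have hB : Tendsto (fun u : ℝ => 2 * ⨍ y in closedBall t |u - t|, ‖g y - g t‖)
      (𝓝[≠] t) (𝓝 0) := by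
    have := (hA.comp habs).const_mul 2
    simpa using this
  rw [hasDerivAt_iff_tendsto_slope, tendsto_iff_dist_tendsto_zero]
  apply squeeze_zero' (Eventually.of_forall fun u => dist_nonneg) _ hB
  filter_upwards [self_mem_nhdsWithin] with u (hu : u ≠ t)
  have hut : u - t ≠ 0 := sub_ne_zero.2 hu
  have hr : (0:ℝ) < |u - t| := abs_pos.2 hut
  have h1 : (∫ s in (0:ℝ)..u, g s) - ∫ s in (0:ℝ)..t, g s = ∫ s in t..u, g s :=
    intervalIntegral.integral_interval_sub_left hg.intervalIntegrable hg.intervalIntegrable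
  have h2 : (∫ s in t..u, g s) - (u - t) * g t = ∫ s in t..u, (g s - g t) := by
    rw [intervalIntegral.integral_sub hg.intervalIntegrable
      (intervalIntegrable_const), intervalIntegral.integral_const]
    simp [smul_eq_mul]
  have hslope : slope (fun u => ∫ s in (0:ℝ)..u, g s) t u - g t
      = (u - t)⁻¹ * ∫ s in t..u, (g s - g t) := by
    rw [slope_def_field]
    field_simp
    linarith [h1, h2]
  have hsub : Set.uIoc t u ⊆ closedBall t |u - t| := by
    intro y hy
    rcases le_total t u with h | h
    · rw [uIoc_of_le h] at hy
      rw [mem_closedBall, Real.dist_eq]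
      rw [abs_of_nonneg (sub_nonneg.2 h)]
      rw [abs_le]; constructor <;> [linarith [hy.1, hy.2]; linarith [hy.1, hy.2]]
    · rw [uIoc_of_ge h] at hy
      rw [mem_closedBall, Real.dist_eq, abs_of_nonpos (sub_nonpos.2 h), abs_le]
      constructor <;> [linarith [hy.1, hy.2]; linarith [hy.1, hy.2]]
  have hint : IntegrableOn (fun y => ‖g y - g t‖) (closedBall t |u - t|) volume :=
    (hg.integrableOn.sub ((integrableOn_const_iff).2
      (Or.inr (measure_closedBall_lt_top)))).norm
  have h3 : ‖∫ s in t..u, (g s - g t)‖ ≤ ∫ y in closedBall t |u - t|, ‖g y - g t‖ := by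
    refine le_trans intervalIntegral.norm_integral_le_integral_norm_uIoc ?_
    exact setIntegral_mono_set hint (Eventually.of_forall fun y => norm_nonneg _)
      (HasSubset.Subset.eventuallyLE hsub)
  have hvol : (volume (closedBall t |u - t|)).toReal = 2 * |u - t| := by
    rw [Real.volume_closedBall, ENNReal.toReal_ofReal (by positivity)]
  have havg : (∫ y in closedBall t |u - t|, ‖g y - g t‖)
      = (2 * |u - t|) * ⨍ y in closedBall t |u - t|, ‖g y - g t‖ := by
    rw [setAverage_eq, smul_eq_mul, measureReal_def, hvol, ← mul_assoc, mul_inv_cancel₀ (by positivity), one_mul]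
  rw [dist_eq_norm]
  calc ‖slope (fun u => ∫ s in (0:ℝ)..u, g s) t u - g t‖
      = |u - t|⁻¹ * ‖∫ s in t..u, (g s - g t)‖ := by
        rw [hslope, norm_mul, norm_inv, Real.norm_eq_abs, Real.norm_eq_abs]
    _ ≤ |u - t|⁻¹ * ((2 * |u - t|) * ⨍ y in closedBall t |u - t|, ‖g y - g t‖) := by
        rw [← havg]; exact mul_le_mul_of_nonneg_left h3 (by positivity)
    _ = 2 * ⨍ y in closedBall t |u - t|, ‖g y - g t‖ := by
        field_simp



/-- Membership in `M^{0,θ}([0,T] × ℝ^N)`: `f` is measurable, `f(t,·) ∈ C^θ(B(0,R))` for every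
`t ∈ [0,T]` and `R > 0`, and `sup_{t ∈ [0,T]} ‖f(t,·)‖_{C^θ(B(0,R))} < ∞` for every `R > 0`. -/
def MemM0 {N : ℕ} (T θ : ℝ) (f : ℝ → ES N → ℝ) : Prop :=
  Measurable (fun p : ℝ × ES N => f p.1 p.2) ∧
  ∀ R > (0:ℝ), ∃ K : ℝ, ∀ t ∈ Icc (0:ℝ) T,
    (∀ x ∈ closedBall (0 : ES N) R, |f t x| ≤ K) ∧
    (∀ x ∈ closedBall (0 : ES N) R, ∀ y ∈ closedBall (0 : ES N) R,
      |f t x - f t y| ≤ K * ‖x - y‖ ^ θ)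

/-- Lemma `lemma-1`(ii) of the paper. Let `θ ∈ (0,1)`,
`f ∈ M^{0,θ}([0,T] × ℝ^N)` and `F(t,x) = ∫₀ᵗ f(s,x) ds`. Then there is a measurable set
`C ⊆ [0,T]` with negligible complement in `[0,T]` such that, for every `(t,x) ∈ C × ℝ^N`,
`F(·,x)` is differentiable at `t` with `D_t F(t,x) = f(t,x)`. -/
theorem primitive_ae_differentiable (N : ℕ) (hN : 1 ≤ N) (T θ : ℝ) (hT : 0 < T)
    (hθ : θ ∈ Ioo (0:ℝ) 1) (f : ℝ → ES N → ℝ) (hf : MemM0 T θ f) :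
    ∃ C : Set ℝ, MeasurableSet C ∧ C ⊆ Icc (0:ℝ) T ∧ volume (Icc (0:ℝ) T \ C) = 0 ∧
      ∀ t ∈ C, ∀ x : ES N,
        HasDerivAt (fun τ => ∫ s in (0:ℝ)..τ, f s x) (f t x) t := by
  obtain ⟨hmeas, hK⟩ := hf
  -- measurability of sections
  have hsec : ∀ y : ES N, Measurable fun s => f s y := fun y =>
    hmeas.comp (measurable_id.prodMk measurable_const)
  -- boundedness / integrability on [0,T] for points in balls
  have hint : ∀ y : ES N, IntegrableOn (fun s => f s y) (Icc (0:ℝ) T) volume := by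
    intro y
    obtain ⟨K, hKy⟩ := hK (‖y‖ + 1) (by positivity)
    refine Measure.integrableOn_of_bounded (M := K) ?_ (hsec y).aestronglyMeasurable ?_
    · simp [Real.volume_Icc]
    · refine (ae_restrict_iff' measurableSet_Icc).2 (ae_of_all _ fun s hs => ?_)
      have hy : y ∈ closedBall (0 : ES N) (‖y‖ + 1) := by
        rw [mem_closedBall, dist_zero_right]; linarith
      simpa [Real.norm_eq_abs] using (hKy s hs).1 y hy
  have hintInt : ∀ y : ES N, ∀ a ∈ Icc (0:ℝ) T, ∀ b ∈ Icc (0:ℝ) T,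
      IntervalIntegrable (fun s => f s y) volume a b := by
    intro y a ha b hb
    exact ((hint y).mono_set (by
      rcases le_total a b with h | h
      · rw [uIcc_of_le h]; exact Icc_subset_Icc ha.1 hb.2
      · rw [uIcc_of_ge h]; exact Icc_subset_Icc hb.1 ha.2)).intervalIntegrable
  -- countable dense set
  obtain ⟨D, Dcount, Ddense⟩ := TopologicalSpace.exists_countable_dense (ES N)
  -- indicator functions and their primitives
  set g : ES N → ℝ → ℝ := fun d s => (Icc (0:ℝ) T).indicator (fun s => f s d) s with hg
  have hgint : ∀ d : ES N, Integrable (g d) := fun d =>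
    (hint d).integrable_indicator measurableSet_Icc
  have hae : ∀ᵐ t : ℝ, ∀ d ∈ D, HasDerivAt (fun u => ∫ s in (0:ℝ)..u, g d s) (g d t) t :=
    (ae_ball_iff Dcount).2 fun d _ => ae_ftc (g d) (hgint d)
  -- extract measurable null superset of bad set
  set B : Set ℝ := {t | ¬ ∀ d ∈ D, HasDerivAt (fun u => ∫ s in (0:ℝ)..u, g d s) (g d t) t}
    with hB
  have hBnull : volume B = 0 := hae
  set C : Set ℝ := Ioo 0 T \ toMeasurable volume B with hC
  refine ⟨C, (measurableSet_Ioo.diff (measurableSet_toMeasurable _ _)), 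
    fun t ht => Ioo_subset_Icc_self ht.1, ?_, ?_⟩
  · refine measure_mono_null (fun t ht => ?_) (?_ : volume ({0, T} ∪ toMeasurable volume B) = 0)
    · rcases ht with ⟨ht1, ht2⟩
      by_cases h : t ∈ toMeasurable volume B
      · exact Or.inr h
      · left
        have : t ∉ Ioo (0:ℝ) T := fun h' => ht2 ⟨h', h⟩
        rcases ht1.1.lt_or_eq with h1 | h1
        · rcases ht1.2.lt_or_eq with h2 | h2
          · exact absurd ⟨h1, h2⟩ this
          · exact Or.inr h2
        · exact Or.inl h1.symm
    · refine measure_union_null ?_ (by rwa [measure_toMeasurable])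
      exact measure_union_null (measure_singleton 0) (measure_singleton T)
  · rintro t ⟨htIoo, htB⟩ x
    have htGood : ∀ d ∈ D, HasDerivAt (fun u => ∫ s in (0:ℝ)..u, g d s) (g d t) t := by
      by_contra h
      exact htB (subset_toMeasurable volume B h)
    have htIcc : t ∈ Icc (0:ℝ) T := Ioo_subset_Icc_self htIoo
    set R : ℝ := ‖x‖ + 1 with hR
    obtain ⟨K, hKR⟩ := hK R (by positivity)
    have hxball : x ∈ closedBall (0 : ES N) R := by
      rw [mem_closedBall, dist_zero_right, hR]; linarith
    have hK0 : 0 ≤ K := le_trans (abs_nonneg _) ((hKR t htIcc).1 x hxball)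
    rw [hasDerivAt_iff_tendsto_slope]
    rw [Metric.tendsto_nhds]
    intro ε hε
    -- choose d ∈ D close to x
    have hcont : ContinuousAt (fun c : ℝ => K * c ^ θ) 0 :=
      (Real.continuousAt_rpow_const 0 θ (Or.inr hθ.1.le)).const_smul K
    have h0 : K * (0:ℝ) ^ θ = 0 := by rw [Real.zero_rpow (ne_of_gt hθ.1)]; ring
    have hev : ∀ᶠ c : ℝ in 𝓝 0, K * c ^ θ < ε / 4 := by
      have := hcont.tendsto
      rw [h0] at this
      exact this.eventually_lt_const (by linarith)
    obtain ⟨δ, hδpos, hδ⟩ := Metric.eventually_nhds_iff.1 hev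
    obtain ⟨d, hdD, hdx⟩ := Ddense.exists_dist_lt x (lt_min hδpos one_pos)
    have hxd : ‖x - d‖ < min δ 1 := by rwa [← dist_eq_norm]
    have hdball : d ∈ closedBall (0 : ES N) R := by
      rw [mem_closedBall, dist_zero_right]
      have : ‖d‖ ≤ ‖x‖ + ‖x - d‖ := by
        have h := norm_sub_le x (x - d)
        rwa [sub_sub_cancel] at h
      have h1 : ‖x - d‖ ≤ 1 := le_of_lt (lt_of_lt_of_le hxd (min_le_right _ _))
      rw [hR]; linarith
    have hη : K * ‖x - d‖ ^ θ < ε / 4 := by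
      apply hδ
      rw [Real.dist_eq, sub_zero, abs_of_nonneg (norm_nonneg _)]
      exact lt_of_lt_of_le hxd (min_le_left _ _)
    set η := K * ‖x - d‖ ^ θ with hηdef
    -- derivative of F_d at t
    have hEq : (fun u => ∫ s in (0:ℝ)..u, g d s) =ᶠ[𝓝 t]
        (fun u => ∫ s in (0:ℝ)..u, f s d) := by
      filter_upwards [Ioo_mem_nhds htIoo.1 htIoo.2] with u hu
      apply intervalIntegral.integral_congr
      intro s hs
      rw [uIcc_of_le (le_of_lt hu.1)] at hs
      exact Set.indicator_of_mem
        (show s ∈ Icc (0:ℝ) T from ⟨hs.1, le_trans hs.2 (le_of_lt hu.2)⟩) fun s => f s d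
    have hd' : HasDerivAt (fun u => ∫ s in (0:ℝ)..u, f s d) (f t d) t := by
      have h5 := (htGood d hdD)
      rw [hEq.hasDerivAt_iff] at h5
      have h6 : g d t = f t d := indicator_of_mem htIcc _
      rwa [h6] at h5
    have hdslope := hasDerivAt_iff_tendsto_slope.1 hd'
    have hdev : ∀ᶠ u in 𝓝[≠] t, dist (slope (fun u => ∫ s in (0:ℝ)..u, f s d) t u) (f t d)
        < ε / 4 := hdslope (Metric.ball_mem_nhds _ (by linarith))
    filter_upwards [hdev, mem_nhdsWithin_of_mem_nhds (Ioo_mem_nhds htIoo.1 htIoo.2),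
      self_mem_nhdsWithin] with u hu1 hu2 (hu3 : u ≠ t)
    have hut : u - t ≠ 0 := sub_ne_zero.2 hu3
    have huIcc : u ∈ Icc (0:ℝ) T := Ioo_subset_Icc_self hu2
    -- slope difference bound
    have hIx : (∫ s in (0:ℝ)..u, f s x) - (∫ s in (0:ℝ)..t, f s x) = ∫ s in t..u, f s x :=
      intervalIntegral.integral_interval_sub_left
        (hintInt x 0 (left_mem_Icc.2 (le_of_lt hT)) u huIcc)
        (hintInt x 0 (left_mem_Icc.2 (le_of_lt hT)) t htIcc)
    have hId : (∫ s in (0:ℝ)..u, f s d) - (∫ s in (0:ℝ)..t, f s d) = ∫ s in t..u, f s d :=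
      intervalIntegral.integral_interval_sub_left
        (hintInt d 0 (left_mem_Icc.2 (le_of_lt hT)) u huIcc)
        (hintInt d 0 (left_mem_Icc.2 (le_of_lt hT)) t htIcc)
    have hsubIcc : Set.uIoc t u ⊆ Icc (0:ℝ) T := by
      rcases le_total t u with h | h
      · rw [uIoc_of_le h]; exact (Ioc_subset_Icc_self).trans (Icc_subset_Icc htIcc.1 huIcc.2)
      · rw [uIoc_of_ge h]; exact (Ioc_subset_Icc_self).trans (Icc_subset_Icc huIcc.1 htIcc.2)
    have hdiff : ‖(∫ s in t..u, f s x) - ∫ s in t..u, f s d‖ ≤ η * |u - t| := by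
      rw [← intervalIntegral.integral_sub
        ((hintInt x 0 (left_mem_Icc.2 (le_of_lt hT)) t htIcc).symm.trans
          (hintInt x 0 (left_mem_Icc.2 (le_of_lt hT)) u huIcc))
        ((hintInt d 0 (left_mem_Icc.2 (le_of_lt hT)) t htIcc).symm.trans
          (hintInt d 0 (left_mem_Icc.2 (le_of_lt hT)) u huIcc))]
      apply intervalIntegral.norm_integral_le_of_norm_le_const
      intro s hs
      have hsIcc := hsubIcc hs
      simpa [Real.norm_eq_abs] using (hKR s hsIcc).2 x hxball d hdball
    have hslopediff : |slope (fun u => ∫ s in (0:ℝ)..u, f s x) t u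
        - slope (fun u => ∫ s in (0:ℝ)..u, f s d) t u| ≤ η := by
      rw [slope_def_field, slope_def_field, div_sub_div_same, hIx, hId, abs_div,
        div_le_iff₀ (abs_pos.2 hut)]
      simpa [Real.norm_eq_abs] using hdiff
    have htd : |f t d - f t x| ≤ η := by
      have h7 := (hKR t htIcc).2 d hdball x hxball
      rwa [norm_sub_rev] at h7
    rw [Real.dist_eq]
    have hsplit : slope (fun u => ∫ s in (0:ℝ)..u, f s x) t u - f t x
        = (slope (fun u => ∫ s in (0:ℝ)..u, f s x) t u
            - slope (fun u => ∫ s in (0:ℝ)..u, f s d) t u)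
          + (slope (fun u => ∫ s in (0:ℝ)..u, f s d) t u - f t d) + (f t d - f t x) := by
      ring
    rw [hsplit]
    rw [Real.dist_eq] at hu1
    calc |_ + _ + (f t d - f t x)| ≤ |_ + _| + |f t d - f t x| := abs_add_le _ _
      _ ≤ |_| + |_| + |f t d - f t x| := by gcongr; exact abs_add_le _ _
      _ < ε := by linarith
end
end

section
/- Let θ ∈ (0,1) and let f ∈ M^{0,θ}([0,T]×ℝ^N). For each n ∈ ℕ define the time-mollification f^{(n)}(t,x) = (n/(4π))^{1/2} ∫_0^T f(τ,x) exp(−(n/4)(t−τ)²) dτ for (t,x) ∈ [0,T]×ℝ^N. Then there exist a strictly increasing sequence of integers (n_k) and a measurable set E ⊆ [0,T], whose complement in [0,T] is Lebesgue-negligible, such that f^{(n_k)}(t,x) → f(t,x) as k → +∞ for every (t,x) ∈ E×ℝ^N. -/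
open Set Filter MeasureTheory Metric
open scoped Topology ENNReal

noncomputable section

/-- The Gaussian time-mollification
`f^{(n)}(t,x) = √(n/(4π)) ∫₀ᵀ f(τ,x) exp(-(n/4)(t-τ)²) dτ`. -/
def timeMollify {N : ℕ} (T : ℝ) (f : ℝ → ES N → ℝ) (n : ℕ) (t : ℝ) (x : ES N) : ℝ :=
  Real.sqrt (n / (4 * Real.pi)) *
    ∫ τ in (0:ℝ)..T, f τ x * Real.exp (-((n : ℝ) / 4) * (t - τ) ^ 2)

namespace TMaux

/-- The Gaussian kernel. -/
def ker (n : ℕ) (s : ℝ) : ℝ :=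
  Real.sqrt (n / (4 * Real.pi)) * Real.exp (-((n : ℝ) / 4) * s ^ 2)

lemma ker_nonneg (n : ℕ) (s : ℝ) : 0 ≤ ker n s := by
  unfold ker; positivity

lemma ker_continuous (n : ℕ) : Continuous (ker n) := by
  unfold ker
  exact continuous_const.mul (Real.continuous_exp.comp (by continuity))

lemma ker_integrable {n : ℕ} (hn : 1 ≤ n) : Integrable (ker n) := by
  have hb : (0:ℝ) < (n : ℝ) / 4 := by
    have : (1:ℝ) ≤ (n:ℝ) := by exact_mod_cast hn
    linarith
  exact (integrable_exp_neg_mul_sq hb).const_mul _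

lemma ker_integral {n : ℕ} (hn : 1 ≤ n) : ∫ s, ker n s = 1 := by
  have hb : (0:ℝ) < (n : ℝ) / 4 := by
    have : (1:ℝ) ≤ (n:ℝ) := by exact_mod_cast hn
    linarith
  have hπ : (0:ℝ) < Real.pi := Real.pi_pos
  unfold ker
  rw [MeasureTheory.integral_const_mul, integral_gaussian,
    ← Real.sqrt_mul (by positivity)]
  rw [show (n : ℝ) / (4 * Real.pi) * (Real.pi / ((n:ℝ)/4)) = 1 by
    field_simp]
  exact Real.sqrt_one

lemma ker_lintegral {n : ℕ} (hn : 1 ≤ n) :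
    ∫⁻ s, ENNReal.ofReal (ker n s) = 1 := by
  rw [← MeasureTheory.ofReal_integral_eq_lintegral_ofReal (ker_integrable hn)
    (Filter.Eventually.of_forall (ker_nonneg n)), ker_integral hn, ENNReal.ofReal_one]

lemma ker_tail {n : ℕ} (hn : 1 ≤ n) {δ : ℝ} (hδ : 0 < δ) :
    ∫⁻ s in {s : ℝ | δ < |s|}, ENNReal.ofReal (ker n s) ≤
      ENNReal.ofReal (Real.sqrt 2 * Real.exp (-((n : ℝ) / 8) * δ ^ 2)) := by
  have hb : (0:ℝ) < (n : ℝ) / 8 := by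
    have : (1:ℝ) ≤ (n:ℝ) := by exact_mod_cast hn
    linarith
  have hπ : (0:ℝ) < Real.pi := Real.pi_pos
  set B : ℝ → ℝ := fun s =>
    (Real.sqrt ((n:ℝ) / (4 * Real.pi)) * Real.exp (-((n : ℝ) / 8) * δ ^ 2)) *
      Real.exp (-((n : ℝ) / 8) * s ^ 2) with hB
  have hBint : Integrable B := (integrable_exp_neg_mul_sq hb).const_mul _
  have hpoint : ∀ s ∈ {s : ℝ | δ < |s|}, ENNReal.ofReal (ker n s) ≤ ENNReal.ofReal (B s) := by
    intro s hs
    apply ENNReal.ofReal_le_ofReal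
    have hs2 : δ ^ 2 ≤ s ^ 2 := by
      have : δ ≤ |s| := le_of_lt hs
      calc δ ^ 2 ≤ |s| ^ 2 := by nlinarith
        _ = s ^ 2 := sq_abs s
    have : Real.exp (-((n : ℝ) / 4) * s ^ 2) ≤
        Real.exp (-((n : ℝ) / 8) * δ ^ 2) * Real.exp (-((n : ℝ) / 8) * s ^ 2) := by
      rw [← Real.exp_add]
      apply Real.exp_le_exp.2
      nlinarith [hb.le]
    calc ker n s ≤ Real.sqrt ((n:ℝ) / (4 * Real.pi)) *
        (Real.exp (-((n : ℝ) / 8) * δ ^ 2) * Real.exp (-((n : ℝ) / 8) * s ^ 2)) := by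
          unfold ker; exact mul_le_mul_of_nonneg_left this (Real.sqrt_nonneg _)
      _ = B s := by rw [hB]; ring
  calc ∫⁻ s in {s : ℝ | δ < |s|}, ENNReal.ofReal (ker n s)
      ≤ ∫⁻ s in {s : ℝ | δ < |s|}, ENNReal.ofReal (B s) := by
        apply setLIntegral_mono' (measurableSet_lt measurable_const measurable_id.abs) hpoint
    _ ≤ ∫⁻ s, ENNReal.ofReal (B s) := setLIntegral_le_lintegral _ _
    _ = ENNReal.ofReal (∫ s, B s) := by
        rw [MeasureTheory.ofReal_integral_eq_lintegral_ofReal hBint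
          (Filter.Eventually.of_forall (fun s => by simp only [hB]; positivity))]
    _ ≤ ENNReal.ofReal (Real.sqrt 2 * Real.exp (-((n : ℝ) / 8) * δ ^ 2)) := by
        apply ENNReal.ofReal_le_ofReal
        apply le_of_eq
        rw [hB]
        rw [MeasureTheory.integral_const_mul, integral_gaussian]
        have h1 : Real.sqrt ((n:ℝ) / (4 * Real.pi)) * Real.sqrt (Real.pi / ((n:ℝ)/8)) =
            Real.sqrt 2 := by
          rw [← Real.sqrt_mul (by positivity)]
          congr 1
          field_simp
          ring
        calc Real.sqrt ((n:ℝ) / (4 * Real.pi)) * Real.exp (-((n : ℝ) / 8) * δ ^ 2) *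
              Real.sqrt (Real.pi / ((n:ℝ)/8))
            = (Real.sqrt ((n:ℝ) / (4 * Real.pi)) * Real.sqrt (Real.pi / ((n:ℝ)/8))) *
              Real.exp (-((n : ℝ) / 8) * δ ^ 2) := by ring
          _ = Real.sqrt 2 * Real.exp (-((n : ℝ) / 8) * δ ^ 2) := by rw [h1]
        


lemma conv_integrable {g : ℝ → ℝ} (hg : Measurable g) {K : ℝ} (hgb : ∀ t, |g t| ≤ K)
    {n : ℕ} (hn : 1 ≤ n) (t : ℝ) :
    Integrable (fun s => g (t - s) * ker n s) := by
  apply Integrable.mono' ((ker_integrable hn).const_mul K)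
  · exact ((hg.comp (measurable_const.sub measurable_id)).mul
      (ker_continuous n).measurable).aestronglyMeasurable
  · filter_upwards with s
    rw [Real.norm_eq_abs, abs_mul, abs_of_nonneg (ker_nonneg n s)]
    exact mul_le_mul_of_nonneg_right (hgb _) (ker_nonneg n s)

lemma conv_sub_repr {g : ℝ → ℝ} (hg : Measurable g) {K : ℝ} (hgb : ∀ t, |g t| ≤ K)
    {n : ℕ} (hn : 1 ≤ n) (t : ℝ) :
    (∫ τ, g τ * ker n (t - τ)) - g t = ∫ s, (g (t - s) - g t) * ker n s := by
  have h1 : (∫ τ, g τ * ker n (t - τ)) = ∫ s, g (t - s) * ker n s := by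
    have := MeasureTheory.integral_sub_left_eq_self (fun τ => g τ * ker n (t - τ)) volume t
    rw [← this]
    congr 1 with s
    simp only [sub_sub_cancel]
  have h2 : g t = ∫ s, g t * ker n s := by
    rw [MeasureTheory.integral_const_mul, ker_integral hn, mul_one]
  rw [h1]
  conv_lhs => rw [h2]
  rw [← MeasureTheory.integral_sub (conv_integrable hg hgb hn t)
    ((ker_integrable hn).const_mul (g t))]
  congr 1 with s
  ring

lemma conv_sub_bound {g : ℝ → ℝ} (hg : Measurable g) {K : ℝ} (hgb : ∀ t, |g t| ≤ K)
    {n : ℕ} (hn : 1 ≤ n) (t : ℝ) :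
    |(∫ τ, g τ * ker n (t - τ)) - g t| ≤ ∫ s, |g (t - s) - g t| * ker n s := by
  rw [conv_sub_repr hg hgb hn t]
  calc |∫ s, (g (t - s) - g t) * ker n s| ≤ ∫ s, ‖(g (t - s) - g t) * ker n s‖ := by
        rw [← Real.norm_eq_abs]
        exact norm_integral_le_integral_norm _
    _ = ∫ s, |g (t - s) - g t| * ker n s := by
        congr 1 with s
        rw [Real.norm_eq_abs, abs_mul, abs_of_nonneg (ker_nonneg n s)]

lemma diff_integrable {g : ℝ → ℝ} (hg : Measurable g) {K : ℝ} (hgb : ∀ t, |g t| ≤ K)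
    {n : ℕ} (hn : 1 ≤ n) (t : ℝ) :
    Integrable (fun s => |g (t - s) - g t| * ker n s) := by
  apply Integrable.mono' ((ker_integrable hn).const_mul (2 * K))
  · exact (((hg.comp (measurable_const.sub measurable_id)).sub measurable_const).abs.mul
      (ker_continuous n).measurable).aestronglyMeasurable
  · filter_upwards with s
    rw [Real.norm_eq_abs, abs_mul, abs_abs, abs_of_nonneg (ker_nonneg n s)]
    have : |g (t - s) - g t| ≤ 2 * K := by
      calc |g (t - s) - g t| ≤ |g (t - s)| + |g t| := abs_sub _ _
        _ ≤ K + K := add_le_add (hgb _) (hgb _)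
        _ = 2 * K := by ring
    exact mul_le_mul_of_nonneg_right this (ker_nonneg n s)

lemma omega_small {g : ℝ → ℝ} (hg : Measurable g) (hgi : Integrable g) {T ρ : ℝ} (hT : 0 < T)
    (hρ : 0 < ρ) :
    ∃ δ > 0, ∀ s : ℝ, |s| < δ →
      ∫⁻ t in Icc (0:ℝ) T, ENNReal.ofReal |g (t - s) - g t| ≤ ENNReal.ofReal ρ := by
  obtain ⟨h, h_supp, h_close, h_cont, h_int⟩ :=
    hgi.exists_hasCompactSupport_lintegral_sub_le
      (ε := ENNReal.ofReal (ρ/3)) (by simp [ENNReal.ofReal_eq_zero]; linarith)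
  have hu := h_supp.uniformContinuous_of_continuous h_cont
  rw [Metric.uniformContinuous_iff] at hu
  obtain ⟨δ, hδ, H⟩ := hu (ρ / (3 * (T + 1))) (by positivity)
  refine ⟨δ, hδ, fun s hs => ?_⟩
  have hgh : ∫⁻ x : ℝ, ENNReal.ofReal |g x - h x| ≤ ENNReal.ofReal (ρ/3) := by
    calc ∫⁻ x : ℝ, ENNReal.ofReal |g x - h x| = ∫⁻ x : ℝ, (‖g x - h x‖₊ : ℝ≥0∞) := by
          simp_rw [← Real.enorm_eq_ofReal_abs, enorm_eq_nnnorm]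
      _ ≤ ENNReal.ofReal (ρ/3) := h_close
  have hA : ∫⁻ t in Icc (0:ℝ) T, ENNReal.ofReal |g (t - s) - h (t - s)| ≤
      ENNReal.ofReal (ρ/3) := by
    calc ∫⁻ t in Icc (0:ℝ) T, ENNReal.ofReal |g (t - s) - h (t - s)|
        ≤ ∫⁻ t : ℝ, ENNReal.ofReal |g (t - s) - h (t - s)| := setLIntegral_le_lintegral _ _
      _ = ∫⁻ x : ℝ, ENNReal.ofReal |g x - h x| :=
          lintegral_sub_right_eq_self (fun x => ENNReal.ofReal |g x - h x|) s
      _ ≤ ENNReal.ofReal (ρ/3) := hgh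
  have hC : ∫⁻ t in Icc (0:ℝ) T, ENNReal.ofReal |h t - g t| ≤ ENNReal.ofReal (ρ/3) := by
    calc ∫⁻ t in Icc (0:ℝ) T, ENNReal.ofReal |h t - g t|
        ≤ ∫⁻ t : ℝ, ENNReal.ofReal |h t - g t| := setLIntegral_le_lintegral _ _
      _ = ∫⁻ x : ℝ, ENNReal.ofReal |g x - h x| := by
          congr 1 with x
          rw [abs_sub_comm]
      _ ≤ ENNReal.ofReal (ρ/3) := hgh
  have hB : ∫⁻ t in Icc (0:ℝ) T, ENNReal.ofReal |h (t - s) - h t| ≤ ENNReal.ofReal (ρ/3) := by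
    calc ∫⁻ t in Icc (0:ℝ) T, ENNReal.ofReal |h (t - s) - h t|
        ≤ ∫⁻ _ in Icc (0:ℝ) T, ENNReal.ofReal (ρ / (3 * (T + 1))) := by
          apply lintegral_mono
          intro t
          apply ENNReal.ofReal_le_ofReal
          apply le_of_lt
          have : dist (t - s) t < δ := by
            rw [Real.dist_eq]
            simpa using hs
          simpa [Real.dist_eq] using H this
      _ = ENNReal.ofReal (ρ / (3 * (T + 1))) * volume (Icc (0:ℝ) T) :=
          setLIntegral_const _ _
      _ = ENNReal.ofReal (ρ / (3 * (T + 1)) * T) := by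
          rw [Real.volume_Icc, ← ENNReal.ofReal_mul (by positivity)]
          norm_num
      _ ≤ ENNReal.ofReal (ρ/3) := by
          apply ENNReal.ofReal_le_ofReal
          rw [div_mul_eq_mul_div, div_le_div_iff₀ (by positivity) (by norm_num)]
          nlinarith
  have hmeasA : Measurable fun t : ℝ => ENNReal.ofReal |g (t - s) - h (t - s)| :=
    (((hg.comp (measurable_id.sub measurable_const)).sub
      (h_cont.measurable.comp (measurable_id.sub measurable_const))).abs).ennreal_ofReal
  have hmeasB : Measurable fun t : ℝ => ENNReal.ofReal |h (t - s) - h t| :=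
    (((h_cont.measurable.comp (measurable_id.sub measurable_const)).sub
      h_cont.measurable).abs).ennreal_ofReal
  calc ∫⁻ t in Icc (0:ℝ) T, ENNReal.ofReal |g (t - s) - g t|
      ≤ ∫⁻ t in Icc (0:ℝ) T, (ENNReal.ofReal |g (t - s) - h (t - s)| +
          (ENNReal.ofReal |h (t - s) - h t| + ENNReal.ofReal |h t - g t|)) := by
        apply lintegral_mono
        intro t
        simp only []
        rw [← ENNReal.ofReal_add (abs_nonneg _) (abs_nonneg _),
          ← ENNReal.ofReal_add (abs_nonneg _) (by positivity)]
        apply ENNReal.ofReal_le_ofReal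
        calc |g (t - s) - g t| ≤ |g (t - s) - h (t - s)| + |h (t - s) - g t| := abs_sub_le _ _ _
          _ ≤ |g (t - s) - h (t - s)| + (|h (t - s) - h t| + |h t - g t|) := by
              exact add_le_add_right (abs_sub_le _ _ _) _
    _ = (∫⁻ t in Icc (0:ℝ) T, ENNReal.ofReal |g (t - s) - h (t - s)|) +
        ((∫⁻ t in Icc (0:ℝ) T, ENNReal.ofReal |h (t - s) - h t|) +
         (∫⁻ t in Icc (0:ℝ) T, ENNReal.ofReal |h t - g t|)) := by
        rw [lintegral_add_left hmeasA, lintegral_add_left hmeasB]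
    _ ≤ ENNReal.ofReal (ρ/3) + (ENNReal.ofReal (ρ/3) + ENNReal.ofReal (ρ/3)) :=
        add_le_add hA (add_le_add hB hC)
    _ ≤ ENNReal.ofReal ρ := by
        rw [← ENNReal.ofReal_add (by positivity) (by positivity),
          ← ENNReal.ofReal_add (by positivity) (by positivity)]
        apply ENNReal.ofReal_le_ofReal
        linarith


lemma conv_L1_key {g : ℝ → ℝ} (hg : Measurable g) {K : ℝ} (hgb : ∀ t, |g t| ≤ K)
    {T : ℝ} (hT : 0 < T) {n : ℕ} (hn : 1 ≤ n) {ρ δ : ℝ} (hδ : 0 < δ)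
    (hω : ∀ s : ℝ, |s| ≤ δ → ∫⁻ t in Icc (0:ℝ) T, ENNReal.ofReal |g (t - s) - g t| ≤
      ENNReal.ofReal ρ) :
    ∫⁻ t in Icc (0:ℝ) T, ENNReal.ofReal |(∫ τ, g τ * ker n (t - τ)) - g t| ≤
      ENNReal.ofReal ρ + ENNReal.ofReal (2 * K * T) *
        ENNReal.ofReal (Real.sqrt 2 * Real.exp (-((n : ℝ) / 8) * δ ^ 2)) := by
  have hK : 0 ≤ K := le_trans (abs_nonneg _) (hgb 0)
  -- pointwise bound in terms of a double lintegral
  have step1 : ∀ t : ℝ, ENNReal.ofReal |(∫ τ, g τ * ker n (t - τ)) - g t| ≤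
      ∫⁻ s, ENNReal.ofReal |g (t - s) - g t| * ENNReal.ofReal (ker n s) := by
    intro t
    calc ENNReal.ofReal |(∫ τ, g τ * ker n (t - τ)) - g t|
        ≤ ENNReal.ofReal (∫ s, |g (t - s) - g t| * ker n s) :=
          ENNReal.ofReal_le_ofReal (conv_sub_bound hg hgb hn t)
      _ = ∫⁻ s, ENNReal.ofReal (|g (t - s) - g t| * ker n s) :=
          MeasureTheory.ofReal_integral_eq_lintegral_ofReal (diff_integrable hg hgb hn t)
            (Filter.Eventually.of_forall fun s => mul_nonneg (abs_nonneg _) (ker_nonneg n s))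
      _ = ∫⁻ s, ENNReal.ofReal |g (t - s) - g t| * ENNReal.ofReal (ker n s) := by
          congr 1 with s
          rw [ENNReal.ofReal_mul (abs_nonneg _)]
  have hmeas2 : Measurable (Function.uncurry fun (t s : ℝ) =>
      ENNReal.ofReal |g (t - s) - g t| * ENNReal.ofReal (ker n s)) := by
    apply Measurable.fun_mul
    · exact (((hg.comp (measurable_fst.sub measurable_snd)).sub
        (hg.comp measurable_fst)).abs).ennreal_ofReal
    · exact ((ker_continuous n).measurable.comp measurable_snd).ennreal_ofReal
  have step2 : ∫⁻ t in Icc (0:ℝ) T, ENNReal.ofReal |(∫ τ, g τ * ker n (t - τ)) - g t| ≤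
      ∫⁻ s, (∫⁻ t in Icc (0:ℝ) T, ENNReal.ofReal |g (t - s) - g t|) *
        ENNReal.ofReal (ker n s) := by
    calc ∫⁻ t in Icc (0:ℝ) T, ENNReal.ofReal |(∫ τ, g τ * ker n (t - τ)) - g t|
        ≤ ∫⁻ t in Icc (0:ℝ) T, ∫⁻ s, ENNReal.ofReal |g (t - s) - g t| *
            ENNReal.ofReal (ker n s) := lintegral_mono fun t => step1 t
      _ = ∫⁻ s, ∫⁻ t in Icc (0:ℝ) T, ENNReal.ofReal |g (t - s) - g t| *
            ENNReal.ofReal (ker n s) :=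
          lintegral_lintegral_swap hmeas2.aemeasurable
      _ = ∫⁻ s, (∫⁻ t in Icc (0:ℝ) T, ENNReal.ofReal |g (t - s) - g t|) *
            ENNReal.ofReal (ker n s) := by
          congr 1 with s
          exact lintegral_mul_const _ (((hg.comp (measurable_id.sub measurable_const)).sub
            hg).abs).ennreal_ofReal
  set W : ℝ → ℝ≥0∞ := fun s => ∫⁻ t in Icc (0:ℝ) T, ENNReal.ofReal |g (t - s) - g t| with hW
  have hWbound : ∀ s, W s ≤ ENNReal.ofReal (2 * K * T) := by
    intro s
    calc W s ≤ ∫⁻ _ in Icc (0:ℝ) T, ENNReal.ofReal (2 * K) := by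
          apply lintegral_mono
          intro t
          apply ENNReal.ofReal_le_ofReal
          calc |g (t - s) - g t| ≤ |g (t - s)| + |g t| := abs_sub _ _
            _ ≤ K + K := add_le_add (hgb _) (hgb _)
            _ = 2 * K := by ring
      _ = ENNReal.ofReal (2 * K) * volume (Icc (0:ℝ) T) := setLIntegral_const _ _
      _ = ENNReal.ofReal (2 * K * T) := by
          rw [Real.volume_Icc, ← ENNReal.ofReal_mul (by positivity)]
          norm_num
  have hAmeas : MeasurableSet {s : ℝ | |s| ≤ δ} :=
    measurableSet_le measurable_id.abs measurable_const
  have hsplit : ∫⁻ s, W s * ENNReal.ofReal (ker n s) =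
      (∫⁻ s in {s : ℝ | |s| ≤ δ}, W s * ENNReal.ofReal (ker n s)) +
      (∫⁻ s in {s : ℝ | |s| ≤ δ}ᶜ, W s * ENNReal.ofReal (ker n s)) :=
    (lintegral_add_compl _ hAmeas).symm
  have hnear : ∫⁻ s in {s : ℝ | |s| ≤ δ}, W s * ENNReal.ofReal (ker n s) ≤
      ENNReal.ofReal ρ := by
    calc ∫⁻ s in {s : ℝ | |s| ≤ δ}, W s * ENNReal.ofReal (ker n s)
        ≤ ∫⁻ s in {s : ℝ | |s| ≤ δ}, ENNReal.ofReal ρ * ENNReal.ofReal (ker n s) := by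
          apply setLIntegral_mono' hAmeas
          intro s hs
          exact mul_le_mul_left (hω s hs) _
      _ ≤ ∫⁻ s, ENNReal.ofReal ρ * ENNReal.ofReal (ker n s) := setLIntegral_le_lintegral _ _
      _ = ENNReal.ofReal ρ * ∫⁻ s, ENNReal.ofReal (ker n s) :=
          lintegral_const_mul _ ((ker_continuous n).measurable.ennreal_ofReal)
      _ = ENNReal.ofReal ρ := by rw [ker_lintegral hn, mul_one]
  have hfar : ∫⁻ s in {s : ℝ | |s| ≤ δ}ᶜ, W s * ENNReal.ofReal (ker n s) ≤
      ENNReal.ofReal (2 * K * T) *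
        ENNReal.ofReal (Real.sqrt 2 * Real.exp (-((n : ℝ) / 8) * δ ^ 2)) := by
    have hcompl : {s : ℝ | |s| ≤ δ}ᶜ = {s : ℝ | δ < |s|} := by
      ext s; simp [not_le]
    calc ∫⁻ s in {s : ℝ | |s| ≤ δ}ᶜ, W s * ENNReal.ofReal (ker n s)
        ≤ ∫⁻ s in {s : ℝ | |s| ≤ δ}ᶜ, ENNReal.ofReal (2 * K * T) *
            ENNReal.ofReal (ker n s) := by
          apply setLIntegral_mono' hAmeas.compl
          intro s _
          exact mul_le_mul_left (hWbound s) _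
      _ = ENNReal.ofReal (2 * K * T) * ∫⁻ s in {s : ℝ | |s| ≤ δ}ᶜ,
            ENNReal.ofReal (ker n s) := by
          rw [lintegral_const_mul _ ((ker_continuous n).measurable.ennreal_ofReal)]
      _ ≤ ENNReal.ofReal (2 * K * T) *
            ENNReal.ofReal (Real.sqrt 2 * Real.exp (-((n : ℝ) / 8) * δ ^ 2)) := by
          apply mul_le_mul_right
          rw [hcompl]
          exact ker_tail hn hδ
  calc ∫⁻ t in Icc (0:ℝ) T, ENNReal.ofReal |(∫ τ, g τ * ker n (t - τ)) - g t|
      ≤ ∫⁻ s, W s * ENNReal.ofReal (ker n s) := step2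
    _ = _ + _ := hsplit
    _ ≤ ENNReal.ofReal ρ + ENNReal.ofReal (2 * K * T) *
        ENNReal.ofReal (Real.sqrt 2 * Real.exp (-((n : ℝ) / 8) * δ ^ 2)) :=
        add_le_add hnear hfar

lemma conv_L1_tendsto {g : ℝ → ℝ} (hg : Measurable g) {K : ℝ} (hgb : ∀ t, |g t| ≤ K)
    (hgi : Integrable g) {T : ℝ} (hT : 0 < T) :
    Tendsto (fun n : ℕ => ∫⁻ t in Icc (0:ℝ) T,
      ENNReal.ofReal |(∫ τ, g τ * ker n (t - τ)) - g t|) atTop (𝓝 0) := by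
  have hK : 0 ≤ K := le_trans (abs_nonneg _) (hgb 0)
  rw [ENNReal.tendsto_atTop_zero]
  intro ε hε
  obtain ⟨ρ, hρ, hρε⟩ : ∃ ρ : ℝ, 0 < ρ ∧ ENNReal.ofReal ρ ≤ ε := by
    refine ⟨(min 1 ε).toReal, ?_, ?_⟩
    · apply ENNReal.toReal_pos
      · simp only [ne_eq, min_eq_iff]
        push_neg
        constructor <;> intro h
        · exact absurd h one_ne_zero
        · exact absurd h (ne_of_gt hε)
      · exact ne_top_of_le_ne_top ENNReal.one_ne_top (min_le_left _ _)
    · rw [ENNReal.ofReal_toReal (ne_top_of_le_ne_top ENNReal.one_ne_top (min_le_left _ _))]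
      exact min_le_right _ _
  obtain ⟨δ, hδ, hω⟩ := omega_small hg hgi hT (show (0:ℝ) < ρ/2 by linarith)
  have hω' : ∀ s : ℝ, |s| ≤ δ/2 → ∫⁻ t in Icc (0:ℝ) T,
      ENNReal.ofReal |g (t - s) - g t| ≤ ENNReal.ofReal (ρ/2) :=
    fun s hs => hω s (lt_of_le_of_lt hs (by linarith))
  have htail : Tendsto (fun n : ℕ =>
      2 * K * T * (Real.sqrt 2 * Real.exp (-((n : ℝ) / 8) * (δ/2) ^ 2))) atTop (𝓝 0) := by
    have h1 : Tendsto (fun n : ℕ => -((n : ℝ) / 8) * (δ/2) ^ 2) atTop atBot := by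
      have h2 : Tendsto (fun n : ℕ => (n : ℝ)) atTop atTop := tendsto_natCast_atTop_atTop
      have h3 := h2.atTop_mul_const_of_neg (show -((δ/2)^2/8) < 0 by nlinarith)
      apply h3.congr
      intro n
      ring
    have h4 : Tendsto (fun n : ℕ => Real.exp (-((n : ℝ) / 8) * (δ/2) ^ 2)) atTop (𝓝 0) :=
      Real.tendsto_exp_atBot.comp h1
    have := (h4.const_mul (2 * K * T * Real.sqrt 2))
    rw [mul_zero] at this
    apply this.congr
    intro n
    ring
  have hev : ∀ᶠ n : ℕ in atTop,
      2 * K * T * (Real.sqrt 2 * Real.exp (-((n : ℝ) / 8) * (δ/2) ^ 2)) < ρ/2 :=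
    htail.eventually_lt_const (by linarith)
  obtain ⟨N, hN⟩ := hev.exists_forall_of_atTop
  refine ⟨max N 1, fun n hn => ?_⟩
  have hn1 : 1 ≤ n := le_trans (le_max_right _ _) hn
  have hnN : N ≤ n := le_trans (le_max_left _ _) hn
  calc ∫⁻ t in Icc (0:ℝ) T, ENNReal.ofReal |(∫ τ, g τ * ker n (t - τ)) - g t|
      ≤ ENNReal.ofReal (ρ/2) + ENNReal.ofReal (2 * K * T) *
        ENNReal.ofReal (Real.sqrt 2 * Real.exp (-((n : ℝ) / 8) * (δ/2) ^ 2)) :=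
        conv_L1_key hg hgb hT hn1 (by positivity) hω'
    _ = ENNReal.ofReal (ρ/2 + 2 * K * T *
        (Real.sqrt 2 * Real.exp (-((n : ℝ) / 8) * (δ/2) ^ 2))) := by
        rw [← ENNReal.ofReal_mul (by positivity), ← ENNReal.ofReal_add (by linarith)
          (by positivity)]
    _ ≤ ENNReal.ofReal ρ := ENNReal.ofReal_le_ofReal (by have := hN n hnN; linarith)
    _ ≤ ε := hρε


lemma conv_meas {g : ℝ → ℝ} (hg : Measurable g) (n : ℕ) :
    Measurable fun t : ℝ => ∫ τ, g τ * ker n (t - τ) := by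
  have h : StronglyMeasurable fun p : ℝ × ℝ => g p.2 * ker n (p.1 - p.2) :=
    ((hg.comp measurable_snd).mul ((ker_continuous n).measurable.comp
      (measurable_fst.sub measurable_snd))).stronglyMeasurable
  exact h.integral_prod_right'.measurable

lemma moll_repr {N : ℕ} {T : ℝ} (hT : 0 ≤ T) (f : ℝ → ES N → ℝ) (n : ℕ) (t : ℝ) (x : ES N) :
    timeMollify T f n t x = ∫ τ, (Icc (0:ℝ) T).indicator (fun τ => f τ x) τ * ker n (t - τ) := by
  have h1 : ∀ τ : ℝ, (Icc (0:ℝ) T).indicator (fun τ => f τ x) τ * ker n (t - τ) =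
      (Icc (0:ℝ) T).indicator (fun τ => f τ x * ker n (t - τ)) τ := by
    intro τ
    by_cases hτ : τ ∈ Icc (0:ℝ) T <;> simp [hτ]
  calc timeMollify T f n t x
      = ∫ τ in Set.Ioc (0:ℝ) T, Real.sqrt ((n:ℝ) / (4 * Real.pi)) *
          (f τ x * Real.exp (-((n : ℝ) / 4) * (t - τ) ^ 2)) := by
        unfold timeMollify
        rw [intervalIntegral.integral_of_le hT, ← MeasureTheory.integral_const_mul]
    _ = ∫ τ in Set.Icc (0:ℝ) T, f τ x * ker n (t - τ) := by
        rw [← MeasureTheory.integral_Icc_eq_integral_Ioc]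
        congr 1 with τ
        unfold ker
        ring
    _ = ∫ τ, (Icc (0:ℝ) T).indicator (fun τ => f τ x * ker n (t - τ)) τ :=
        (MeasureTheory.integral_indicator measurableSet_Icc).symm
    _ = ∫ τ, (Icc (0:ℝ) T).indicator (fun τ => f τ x) τ * ker n (t - τ) := by
        congr 1 with τ
        rw [h1]

lemma sqrt_mul_gauss_le_one {T : ℝ} (hT : 0 ≤ T) (n : ℕ) (t : ℝ) :
    Real.sqrt ((n:ℝ) / (4 * Real.pi)) *
      ∫ τ in (0:ℝ)..T, Real.exp (-((n : ℝ) / 4) * (t - τ) ^ 2) ≤ 1 := by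
  rcases Nat.eq_zero_or_pos n with hn | hn
  · subst hn
    simp
  · have hb : (0:ℝ) < (n : ℝ) / 4 := by
      have : (1:ℝ) ≤ (n:ℝ) := by exact_mod_cast hn
      linarith
    have hπ : (0:ℝ) < Real.pi := Real.pi_pos
    have hI : Integrable (fun τ : ℝ => Real.exp (-((n : ℝ) / 4) * (t - τ) ^ 2)) :=
      (integrable_exp_neg_mul_sq hb).comp_sub_left t
    have h2 : (∫ τ in (0:ℝ)..T, Real.exp (-((n : ℝ) / 4) * (t - τ) ^ 2)) ≤
        ∫ τ, Real.exp (-((n : ℝ) / 4) * (t - τ) ^ 2) := by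
      rw [intervalIntegral.integral_of_le hT]
      exact setIntegral_le_integral hI (Filter.Eventually.of_forall fun τ => by positivity)
    have h3 : (∫ τ, Real.exp (-((n : ℝ) / 4) * (t - τ) ^ 2)) =
        Real.sqrt (Real.pi / ((n:ℝ)/4)) := by
      rw [MeasureTheory.integral_sub_left_eq_self
        (fun s => Real.exp (-((n : ℝ) / 4) * s ^ 2)) volume t]
      exact integral_gaussian _
    calc Real.sqrt ((n:ℝ) / (4 * Real.pi)) *
          ∫ τ in (0:ℝ)..T, Real.exp (-((n : ℝ) / 4) * (t - τ) ^ 2)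
        ≤ Real.sqrt ((n:ℝ) / (4 * Real.pi)) * Real.sqrt (Real.pi / ((n:ℝ)/4)) := by
          rw [← h3]
          exact mul_le_mul_of_nonneg_left h2 (Real.sqrt_nonneg _)
      _ = 1 := by
          rw [← Real.sqrt_mul (by positivity)]
          rw [show (n : ℝ) / (4 * Real.pi) * (Real.pi / ((n:ℝ)/4)) = 1 by
            have : (0:ℝ) < (n:ℝ) := by exact_mod_cast hn
            field_simp]
          exact Real.sqrt_one


lemma moll_diff_le {N : ℕ} {T : ℝ} (hT : 0 ≤ T) {f : ℝ → ES N → ℝ}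
    (hfm : Measurable (fun p : ℝ × ES N => f p.1 p.2)) (n : ℕ) (t : ℝ) {x y : ES N}
    {Kx Ky C : ℝ} (hC : 0 ≤ C)
    (hbx : ∀ τ ∈ Icc (0:ℝ) T, |f τ x| ≤ Kx) (hby : ∀ τ ∈ Icc (0:ℝ) T, |f τ y| ≤ Ky)
    (hxy : ∀ τ ∈ Icc (0:ℝ) T, |f τ x - f τ y| ≤ C) :
    |timeMollify T f n t x - timeMollify T f n t y| ≤ C := by
  set e : ℝ → ℝ := fun τ => Real.exp (-((n : ℝ) / 4) * (t - τ) ^ 2) with he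
  have he0 : ∀ τ, 0 < e τ := fun τ => Real.exp_pos _
  have he1 : ∀ τ, e τ ≤ 1 := by
    intro τ
    rw [he]
    apply Real.exp_le_one_iff.2
    nlinarith [sq_nonneg (t - τ), Nat.cast_nonneg (α := ℝ) n]
  have hemeas : Measurable e := (Real.continuous_exp.comp (by continuity)).measurable
  have hmz : ∀ z : ES N, Measurable fun τ => f τ z := fun z =>
    hfm.comp (measurable_id.prodMk measurable_const)
  have hfin : volume (Set.Ioc (0:ℝ) T) ≠ ⊤ := by
    rw [Real.volume_Ioc]; exact ENNReal.ofReal_ne_top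
  have hbdd : ∀ (z : ES N) (Kz : ℝ), (∀ τ ∈ Icc (0:ℝ) T, |f τ z| ≤ Kz) →
      IntegrableOn (fun τ => f τ z * e τ) (Set.Ioc (0:ℝ) T) := by
    intro z Kz hKz
    apply Measure.integrableOn_of_bounded hfin
      ((hmz z).fun_mul hemeas).aestronglyMeasurable (M := Kz)
    rw [ae_restrict_iff' measurableSet_Ioc]
    apply Filter.Eventually.of_forall
    intro τ hτ
    rw [Real.norm_eq_abs, abs_mul, abs_of_pos (he0 τ)]
    calc |f τ z| * e τ ≤ Kz * 1 := by
          apply mul_le_mul (hKz τ (Set.Ioc_subset_Icc_self hτ)) (he1 τ)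
            (he0 τ).le (le_trans (abs_nonneg _) (hKz τ (Set.Ioc_subset_Icc_self hτ)))
      _ = Kz := mul_one _
  have hIx := hbdd x Kx hbx
  have hIy := hbdd y Ky hby
  have hICe : IntegrableOn (fun τ => C * e τ) (Set.Ioc (0:ℝ) T) := by
    apply Measure.integrableOn_of_bounded hfin
      (hemeas.const_mul C).aestronglyMeasurable (M := C)
    apply Filter.Eventually.of_forall
    intro τ
    rw [Real.norm_eq_abs, abs_mul, abs_of_pos (he0 τ), abs_of_nonneg hC]
    nlinarith [he1 τ, (he0 τ).le]
  have hrepr : timeMollify T f n t x - timeMollify T f n t y =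
      Real.sqrt ((n:ℝ) / (4 * Real.pi)) *
        ∫ τ in Set.Ioc (0:ℝ) T, (f τ x - f τ y) * e τ := by
    unfold timeMollify
    rw [intervalIntegral.integral_of_le hT, intervalIntegral.integral_of_le hT,
      ← mul_sub, ← MeasureTheory.integral_sub hIx hIy]
    congr 1
    apply integral_congr_ae
    apply Filter.Eventually.of_forall
    intro τ
    simp only [Pi.sub_apply]
    ring
  have habs : |∫ τ in Set.Ioc (0:ℝ) T, (f τ x - f τ y) * e τ| ≤
      ∫ τ in Set.Ioc (0:ℝ) T, C * e τ := by
    calc |∫ τ in Set.Ioc (0:ℝ) T, (f τ x - f τ y) * e τ|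
        ≤ ∫ τ in Set.Ioc (0:ℝ) T, ‖(f τ x - f τ y) * e τ‖ := by
          rw [← Real.norm_eq_abs]
          exact norm_integral_le_integral_norm _
      _ ≤ ∫ τ in Set.Ioc (0:ℝ) T, C * e τ := by
          have hIdiff : IntegrableOn (fun τ => (f τ x - f τ y) * e τ) (Set.Ioc (0:ℝ) T) := by
            apply Measure.integrableOn_of_bounded hfin
              (((hmz x).sub (hmz y)).fun_mul hemeas).aestronglyMeasurable (M := C)
            rw [ae_restrict_iff' measurableSet_Ioc]
            apply Filter.Eventually.of_forall
            intro τ hτ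
            rw [Real.norm_eq_abs, abs_mul, abs_of_pos (he0 τ)]
            calc |f τ x - f τ y| * e τ ≤ C * 1 :=
                  mul_le_mul (hxy τ (Set.Ioc_subset_Icc_self hτ)) (he1 τ) (he0 τ).le hC
              _ = C := mul_one _
          apply setIntegral_mono_on hIdiff.norm hICe measurableSet_Ioc
          intro τ hτ
          rw [Real.norm_eq_abs]
          calc |(f τ x - f τ y) * e τ| = |f τ x - f τ y| * e τ := by
                rw [abs_mul, abs_of_pos (he0 τ)]
            _ ≤ C * e τ :=
              mul_le_mul_of_nonneg_right (hxy τ (Set.Ioc_subset_Icc_self hτ)) (he0 τ).le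
  have hgauss : Real.sqrt ((n:ℝ) / (4 * Real.pi)) * ∫ τ in Set.Ioc (0:ℝ) T, e τ ≤ 1 := by
    have := sqrt_mul_gauss_le_one hT n t
    rwa [intervalIntegral.integral_of_le hT] at this
  have hgauss0 : 0 ≤ ∫ τ in Set.Ioc (0:ℝ) T, e τ :=
    setIntegral_nonneg measurableSet_Ioc fun τ _ => (he0 τ).le
  calc |timeMollify T f n t x - timeMollify T f n t y|
      = Real.sqrt ((n:ℝ) / (4 * Real.pi)) *
          |∫ τ in Set.Ioc (0:ℝ) T, (f τ x - f τ y) * e τ| := by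
        rw [hrepr, abs_mul, abs_of_nonneg (Real.sqrt_nonneg _)]
    _ ≤ Real.sqrt ((n:ℝ) / (4 * Real.pi)) * ∫ τ in Set.Ioc (0:ℝ) T, C * e τ :=
        mul_le_mul_of_nonneg_left habs (Real.sqrt_nonneg _)
    _ = C * (Real.sqrt ((n:ℝ) / (4 * Real.pi)) * ∫ τ in Set.Ioc (0:ℝ) T, e τ) := by
        rw [MeasureTheory.integral_const_mul]
        ring
    _ ≤ C * 1 := mul_le_mul_of_nonneg_left hgauss hC
    _ = C := mul_one _

lemma moll_measurable {N : ℕ} {T : ℝ} (hT : 0 ≤ T) {f : ℝ → ES N → ℝ}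
    (hfm : Measurable (fun p : ℝ × ES N => f p.1 p.2)) (n : ℕ) (x : ES N) :
    Measurable fun t => timeMollify T f n t x := by
  have : (fun t => timeMollify T f n t x) =
      fun t => ∫ τ, (Icc (0:ℝ) T).indicator (fun τ => f τ x) τ * ker n (t - τ) := by
    funext t
    exact moll_repr hT f n t x
  rw [this]
  exact conv_meas (((hfm.comp (measurable_id.prodMk measurable_const))).indicator
    measurableSet_Icc) n

end TMaux


/-- from the proof of Lemma `lemma-2` of the paper. If `θ ∈ (0,1)` and
`f ∈ M^{0,θ}([0,T] × ℝ^N)`, then there exist a strictly increasing sequence `(n_k)` of integers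
and a measurable set `E ⊆ [0,T]` with negligible complement in `[0,T]` such that
`f^{(n_k)}(t,x) → f(t,x)` as `k → ∞` for every `(t,x) ∈ E × ℝ^N`. -/
theorem timeMollify_subsequence_converges (N : ℕ) (hN : 1 ≤ N) (T θ : ℝ) (hT : 0 < T)
    (hθ : θ ∈ Ioo (0:ℝ) 1) (f : ℝ → ES N → ℝ) (hf : MemM0 T θ f) :
    ∃ nk : ℕ → ℕ, StrictMono nk ∧
      ∃ E : Set ℝ, MeasurableSet E ∧ E ⊆ Icc (0:ℝ) T ∧ volume (Icc (0:ℝ) T \ E) = 0 ∧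
        ∀ t ∈ E, ∀ x : ES N,
          Tendsto (fun k => timeMollify T f (nk k) t x) atTop (𝓝 (f t x)) := by
  classical
  obtain ⟨hfm, hfK⟩ := hf
  have hmz : ∀ z : ES N, Measurable fun τ => f τ z := fun z =>
    hfm.comp (measurable_id.prodMk measurable_const)
  have hbound : ∀ x : ES N, ∃ K : ℝ, 0 ≤ K ∧ ∀ τ ∈ Icc (0:ℝ) T, |f τ x| ≤ K := by
    intro x
    obtain ⟨K, hK⟩ := hfK (‖x‖ + 1) (by positivity)
    have hxball : x ∈ closedBall (0 : ES N) (‖x‖ + 1) := by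
      rw [mem_closedBall_zero_iff]; linarith
    refine ⟨K, ?_, fun τ hτ => (hK τ hτ).1 x hxball⟩
    exact le_trans (abs_nonneg _) ((hK 0 (left_mem_Icc.mpr hT.le)).1 x hxball)
  have hGmeas : ∀ x : ES N, Measurable ((Icc (0:ℝ) T).indicator (fun τ => f τ x)) := fun x =>
    (hmz x).indicator measurableSet_Icc
  have hGb : ∀ x : ES N, ∃ K : ℝ, 0 ≤ K ∧
      ∀ t, |(Icc (0:ℝ) T).indicator (fun τ => f τ x) t| ≤ K := by
    intro x
    obtain ⟨K, hK0, hK⟩ := hbound x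
    refine ⟨K, hK0, fun t => ?_⟩
    by_cases ht : t ∈ Icc (0:ℝ) T
    · rw [indicator_of_mem ht]; exact hK t ht
    · rw [indicator_of_notMem ht]; simpa using hK0
  have hGint : ∀ x : ES N, Integrable ((Icc (0:ℝ) T).indicator (fun τ => f τ x)) := by
    intro x
    obtain ⟨K, hK0, hK⟩ := hbound x
    rw [integrable_indicator_iff measurableSet_Icc]
    apply Measure.integrableOn_of_bounded (M := K)
    · rw [Real.volume_Icc]; exact ENNReal.ofReal_ne_top
    · exact (hmz x).aestronglyMeasurable
    · rw [ae_restrict_iff' measurableSet_Icc]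
      exact Filter.Eventually.of_forall fun τ hτ => hK τ hτ
  -- L¹ convergence of the mollification at every fixed x
  have hΦ : ∀ x : ES N, Tendsto (fun n : ℕ => ∫⁻ t in Icc (0:ℝ) T,
      ENNReal.ofReal |timeMollify T f n t x - f t x|) atTop (𝓝 0) := by
    intro x
    obtain ⟨K, hK0, hKb⟩ := hGb x
    have h0 := TMaux.conv_L1_tendsto (hGmeas x) hKb (hGint x) hT
    apply h0.congr
    intro n
    apply setLIntegral_congr_fun_ae measurableSet_Icc
    apply Filter.Eventually.of_forall
    intro t ht
    rw [← TMaux.moll_repr hT.le f n t x, indicator_of_mem ht]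
  -- countable dense set
  set D : ℕ → ES N := TopologicalSpace.denseSeq (ES N) with hDdef
  have hDdense : DenseRange D := TopologicalSpace.denseRange_denseSeq _
  -- diagonal subsequence
  have hch : ∀ k : ℕ, ∃ Nk : ℕ, ∀ n, Nk ≤ n → ∀ m, m ≤ k →
      (∫⁻ t in Icc (0:ℝ) T, ENNReal.ofReal |timeMollify T f n t (D m) - f t (D m)|) ≤
        (2:ℝ≥0∞)⁻¹ ^ k := by
    intro k
    have hpos : (0:ℝ≥0∞) < 2⁻¹ ^ k := by
      apply ENNReal.pow_pos
      simp
    have hthr : ∀ m : ℕ, ∃ Nm : ℕ, ∀ n, Nm ≤ n →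
        (∫⁻ t in Icc (0:ℝ) T, ENNReal.ofReal |timeMollify T f n t (D m) - f t (D m)|) ≤
          (2:ℝ≥0∞)⁻¹ ^ k :=
      fun m => ENNReal.tendsto_atTop_zero.mp (hΦ (D m)) _ hpos
    choose Nm hNm using hthr
    refine ⟨(Finset.range (k+1)).sup Nm, fun n hn m hm => hNm m n (le_trans ?_ hn)⟩
    exact Finset.le_sup (Finset.mem_range.mpr (Nat.lt_succ_of_le hm))
  choose Nth hNth using hch
  set nk : ℕ → ℕ := fun k => Nat.rec (max (Nth 0) 1) (fun k ih => max (Nth (k+1)) (ih + 1)) k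
    with hnkdef
  have hnk0 : nk 0 = max (Nth 0) 1 := rfl
  have hnksucc : ∀ k, nk (k+1) = max (Nth (k+1)) (nk k + 1) := fun k => rfl
  have hmono : StrictMono nk := strictMono_nat_of_lt_succ fun k => by
    rw [hnksucc]
    exact lt_of_lt_of_le (Nat.lt_succ_self _) (le_max_right _ _)
  have hnkN : ∀ k, Nth k ≤ nk k := by
    intro k
    cases k with
    | zero => rw [hnk0]; exact le_max_left _ _
    | succ k => rw [hnksucc]; exact le_max_left _ _
  have hΦnk : ∀ m k, m ≤ k →
      (∫⁻ t in Icc (0:ℝ) T, ENNReal.ofReal |timeMollify T f (nk k) t (D m) - f t (D m)|) ≤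
        (2:ℝ≥0∞)⁻¹ ^ k := fun m k hmk => hNth k (nk k) (hnkN k) m hmk
  -- Borel–Cantelli type argument for each m
  have hae : ∀ m : ℕ, ∀ᵐ t ∂(volume.restrict (Icc (0:ℝ) T)),
      Tendsto (fun k => timeMollify T f (nk k) t (D m)) atTop (𝓝 (f t (D m))) := by
    intro m
    have hFmeas : ∀ k : ℕ, Measurable fun t =>
        ENNReal.ofReal |timeMollify T f (nk (k + m)) t (D m) - f t (D m)| := fun k =>
      (((TMaux.moll_measurable hT.le hfm _ _).sub (hmz (D m))).abs).ennreal_ofReal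
    have hsum : (∫⁻ t in Icc (0:ℝ) T, ∑' k : ℕ,
        ENNReal.ofReal |timeMollify T f (nk (k + m)) t (D m) - f t (D m)|) ≠ ⊤ := by
      rw [lintegral_tsum (fun k => (hFmeas k).aemeasurable)]
      have hb : ∀ k : ℕ, (∫⁻ t in Icc (0:ℝ) T,
          ENNReal.ofReal |timeMollify T f (nk (k + m)) t (D m) - f t (D m)|) ≤
            (2:ℝ≥0∞)⁻¹ ^ k := by
        intro k
        calc (∫⁻ t in Icc (0:ℝ) T,
            ENNReal.ofReal |timeMollify T f (nk (k + m)) t (D m) - f t (D m)|)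
            ≤ (2:ℝ≥0∞)⁻¹ ^ (k + m) := hΦnk m (k+m) (Nat.le_add_left m k)
          _ ≤ (2:ℝ≥0∞)⁻¹ ^ k := by
              rw [pow_add]
              apply mul_le_of_le_one_right'
              exact pow_le_one' (ENNReal.inv_le_one.mpr one_le_two) m
      apply ne_top_of_le_ne_top ?_ (ENNReal.tsum_le_tsum hb)
      rw [ENNReal.tsum_geometric, ENNReal.one_sub_inv_two]
      simp
    have hael := ae_lt_top (Measurable.ennreal_tsum hFmeas) hsum
    filter_upwards [hael] with t ht
    have hterm := ENNReal.tendsto_atTop_zero_of_tsum_ne_top ht.ne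
    have h2 : Tendsto (fun k => |timeMollify T f (nk (k + m)) t (D m) - f t (D m)|)
        atTop (𝓝 0) := by
      have h3 := (ENNReal.tendsto_toReal (by simp : (0:ℝ≥0∞) ≠ ⊤)).comp hterm
      simp only [ENNReal.toReal_zero] at h3
      apply h3.congr
      intro k
      simp [Function.comp, ENNReal.toReal_ofReal (abs_nonneg _)]
    have h4 : Tendsto (fun k => timeMollify T f (nk (k + m)) t (D m)) atTop
        (𝓝 (f t (D m))) := by
      rw [tendsto_iff_dist_tendsto_zero]
      simpa [Real.dist_eq] using h2
    exact (tendsto_add_atTop_iff_nat m).mp h4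
  refine ⟨nk, hmono, ?_⟩
  have haeall : ∀ᵐ t ∂(volume.restrict (Icc (0:ℝ) T)), ∀ m : ℕ,
      Tendsto (fun k => timeMollify T f (nk k) t (D m)) atTop (𝓝 (f t (D m))) :=
    (ae_all_iff).mpr hae
  have hA0 : volume.restrict (Icc (0:ℝ) T) {t : ℝ | ∀ m : ℕ,
      Tendsto (fun k => timeMollify T f (nk k) t (D m)) atTop (𝓝 (f t (D m)))}ᶜ = 0 := by
    rw [compl_setOf]
    exact ae_iff.mp haeall
  have hA1 : volume ({t : ℝ | ∀ m : ℕ,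
      Tendsto (fun k => timeMollify T f (nk k) t (D m)) atTop (𝓝 (f t (D m)))}ᶜ ∩
        Icc (0:ℝ) T) = 0 := by
    rwa [Measure.restrict_apply' measurableSet_Icc] at hA0
  set Bad : Set ℝ := toMeasurable volume ({t : ℝ | ∀ m : ℕ,
      Tendsto (fun k => timeMollify T f (nk k) t (D m)) atTop (𝓝 (f t (D m)))}ᶜ ∩
        Icc (0:ℝ) T) with hBaddef
  refine ⟨Icc (0:ℝ) T \ Bad,
    measurableSet_Icc.diff (measurableSet_toMeasurable _ _), diff_subset, ?_, ?_⟩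
  · apply measure_mono_null (t := Bad)
    · intro u hu
      simp only [mem_diff, mem_Icc, not_and, not_not] at hu ⊢
      exact hu.2 hu.1
    · rw [hBaddef, measure_toMeasurable]
      exact hA1
  · intro t ht x
    have htIcc : t ∈ Icc (0:ℝ) T := ht.1
    have htA : ∀ m : ℕ,
        Tendsto (fun k => timeMollify T f (nk k) t (D m)) atTop (𝓝 (f t (D m))) := by
      by_contra hcon
      push_neg at hcon
      apply ht.2
      apply subset_toMeasurable
      refine ⟨?_, htIcc⟩
      simp only [mem_compl_iff, mem_setOf_eq]
      push_neg
      exact hcon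
    rw [Metric.tendsto_atTop]
    intro ε hε
    obtain ⟨K, hK⟩ := hfK (‖x‖ + 1) (by positivity)
    have hxball : x ∈ closedBall (0 : ES N) (‖x‖ + 1) := by
      rw [mem_closedBall_zero_iff]; linarith
    have hK0 : 0 ≤ K := le_trans (abs_nonneg _) ((hK 0 (left_mem_Icc.mpr hT.le)).1 x hxball)
    have hθ0 : 0 < θ := hθ.1
    set a : ℝ := ε / (3 * (K + 1)) with hadef
    have ha : 0 < a := by positivity
    set r : ℝ := min 1 (a ^ (1/θ)) with hrdef
    have hr : 0 < r := lt_min one_pos (Real.rpow_pos_of_pos ha _)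
    obtain ⟨m, hdist⟩ := hDdense.exists_dist_lt x hr
    have hxy : ‖x - D m‖ < r := by rwa [← dist_eq_norm]
    have hmball : D m ∈ closedBall (0 : ES N) (‖x‖ + 1) := by
      rw [mem_closedBall_zero_iff]
      have h5 : ‖D m‖ ≤ ‖D m - x‖ + ‖x‖ := by
        calc ‖D m‖ = ‖D m - x + x‖ := by rw [sub_add_cancel]
          _ ≤ ‖D m - x‖ + ‖x‖ := norm_add_le _ _
      have h6 : ‖D m - x‖ < r := by rwa [norm_sub_rev]
      have h7 : r ≤ 1 := min_le_left _ _
      linarith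
    have hpow : ‖x - D m‖ ^ θ ≤ a := by
      calc ‖x - D m‖ ^ θ ≤ (a ^ (1/θ)) ^ θ := by
            apply Real.rpow_le_rpow (norm_nonneg _) ?_ hθ0.le
            exact le_trans hxy.le (min_le_right _ _)
        _ = a := by
            rw [← Real.rpow_mul ha.le, one_div, inv_mul_cancel₀ (ne_of_gt hθ0), Real.rpow_one]
    have hKa : K * a < ε / 3 := by
      have hεa : ε / 3 = a * (K + 1) := by
        rw [hadef]
        field_simp
      rw [hεa]
      nlinarith [ha]
    have h1 : |f t x - f t (D m)| ≤ K * a := by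
      calc |f t x - f t (D m)| ≤ K * ‖x - D m‖ ^ θ := (hK t htIcc).2 x hxball (D m) hmball
        _ ≤ K * a := mul_le_mul_of_nonneg_left hpow hK0
    have h2 : ∀ k : ℕ,
        |timeMollify T f (nk k) t x - timeMollify T f (nk k) t (D m)| ≤ K * a := by
      intro k
      apply TMaux.moll_diff_le hT.le hfm (nk k) t (Kx := K) (Ky := K)
        (mul_nonneg hK0 ha.le)
      · exact fun τ hτ => (hK τ hτ).1 x hxball
      · exact fun τ hτ => (hK τ hτ).1 (D m) hmball
      · intro τ hτ
        calc |f τ x - f τ (D m)| ≤ K * ‖x - D m‖ ^ θ := (hK τ hτ).2 x hxball (D m) hmball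
          _ ≤ K * a := mul_le_mul_of_nonneg_left hpow hK0
    obtain ⟨N0, hN0⟩ := Metric.tendsto_atTop.mp (htA m) (ε/3) (by positivity)
    refine ⟨N0, fun k hk => ?_⟩
    rw [Real.dist_eq]
    have hb3 := hN0 k hk
    rw [Real.dist_eq] at hb3
    have hc1 := abs_sub_le (timeMollify T f (nk k) t x) (timeMollify T f (nk k) t (D m)) (f t x)
    have hc2 := abs_sub_le (timeMollify T f (nk k) t (D m)) (f t (D m)) (f t x)
    have hc3 : |f t (D m) - f t x| = |f t x - f t (D m)| := abs_sub_comm _ _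
    have hc4 := h2 k
    linarith
end
end
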